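/- arXiv:2403.14162 — 9 statements merged into one kernel-verified Lean document; each statement's English description precedes it below -/
import Mathlib

section
/- For every complex number z with |z| < 1, the derivative of the function 𝔅(z) = (1 + tanh z)^{1/2} has positive real part: Re 𝔅'(z) > 0. (Consequently, by the Noshiro–Warschawski criterion, 𝔅 is univalent on the unit disk.) -/
set_option maxHeartbeats 1000000

open Complex Metric

/-- The bean function 𝔅(z) = (1 + tanh z)^(1/2), principal branch of the complex power. -/
noncomputable def Bean (z : ℂ) : ℂ := (1 + Complex.tanh z) ^ ((1:ℂ)/2)

/-- The open unit disk in ℂ. -/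
def unitDisk : Set ℂ := Metric.ball (0:ℂ) 1

/-- `Subord p g` : p is subordinate to g on the unit disk. -/
def Subord (p g : ℂ → ℂ) : Prop :=
  ∃ ω : ℂ → ℂ, AnalyticOnNhd ℂ ω unitDisk ∧ ω 0 = 0 ∧
    (∀ z ∈ unitDisk, ‖ω z‖ < 1) ∧ ∀ z ∈ unitDisk, p z = g (ω z)

/- ### Auxiliary real estimates -/

private lemma expUB' {t c : ℝ} (h : t ≤ c) (hc : c < 1) : Real.exp t ≤ 1/(1-c) := by
  have h1 : 1 - c ≤ Real.exp (-t) := by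
    calc 1 - c ≤ (-t) + 1 := by linarith
    _ ≤ Real.exp (-t) := Real.add_one_le_exp _
  have h2 : 0 < 1 - c := by linarith
  rw [Real.exp_neg] at h1
  rw [le_div_iff₀ h2]
  calc Real.exp t * (1-c) ≤ Real.exp t * (Real.exp t)⁻¹ :=
        mul_le_mul_of_nonneg_left h1 (Real.exp_nonneg t)
  _ = 1 := mul_inv_cancel₀ (Real.exp_ne_zero t)

private lemma sqrt3_gt' : 1.732 < Real.sqrt 3 := by
  have : (1.732:ℝ) = Real.sqrt (1.732^2) := by
    rw [Real.sqrt_sq]; norm_num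
  rw [this]
  apply Real.sqrt_lt_sqrt <;> norm_num

private lemma rePosAux {x y : ℝ} (h : x^2 + y^2 < 1) :
    0 < Real.exp (4*x/3) * Real.cos (4*y/3) + Real.exp (-(2*x)/3) * Real.cos (2*y/3) := by
  have hpi := Real.pi_gt_d6
  have hy : |y| < 1 := by nlinarith [sq_nonneg x, abs_nonneg y, _root_.sq_abs y]
  have h1 : 0 < Real.cos (4*y/3) := by
    apply Real.cos_pos_of_mem_Ioo
    constructor <;> cases' abs_lt.1 hy with h1 h2 <;> nlinarith
  have h2 : 0 < Real.cos (2*y/3) := by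
    apply Real.cos_pos_of_mem_Ioo
    constructor <;> cases' abs_lt.1 hy with h1 h2 <;> nlinarith
  positivity

private lemma mainIneqAux {x y : ℝ} (h : x^2 + y^2 < 1) (hy : 0 ≤ y) :
    Real.exp (4*x/3) * Real.sin (4*y/3) - Real.exp (-(2*x)/3) * Real.sin (2*y/3)
      < Real.sqrt 3 * (Real.exp (4*x/3) * Real.cos (4*y/3) + Real.exp (-(2*x)/3) * Real.cos (2*y/3)) := by
  have hpi := Real.pi_gt_d6
  have hpi' := Real.pi_lt_d2
  have hs3 := sqrt3_gt'
  set a := 4*y/3 with ha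
  set b := 2*y/3 with hb
  set A := Real.exp (4*x/3) with hA
  set B := Real.exp (-(2*x)/3) with hB
  have hy1 : y < 1 := by nlinarith [sq_nonneg x]
  have hA0 : 0 < A := Real.exp_pos _
  have hB0 : 0 < B := Real.exp_pos _
  have ha0 : 0 ≤ a := by positivity
  have hb0 : 0 ≤ b := by positivity
  have hbpi : b ≤ 2/3 := by rw [hb]; linarith
  have hcb : (0.7777:ℝ) ≤ Real.cos b := by
    have := Real.one_sub_sq_div_two_le_cos (x := b)
    nlinarith
  have hcospos : 0 < Real.cos a := by
    apply Real.cos_pos_of_mem_Ioo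
    constructor <;> rw [ha] <;> nlinarith
  have hsinb : 0 ≤ Real.sin b := Real.sin_nonneg_of_nonneg_of_le_pi hb0 (by nlinarith)
  have hid : Real.sin a - Real.sqrt 3 * Real.cos a = 2 * Real.sin (a - Real.pi/3) := by
    rw [Real.sin_sub, Real.sin_pi_div_three, Real.cos_pi_div_three]
    ring
  rcases le_or_gt a (Real.pi/3) with hcase | hcase
  · have h1 : Real.sin (a - Real.pi/3) ≤ 0 :=
      Real.sin_nonpos_of_nonpos_of_neg_pi_le (by linarith) (by nlinarith)
    nlinarith [mul_nonneg hB0.le hsinb,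
      mul_pos hB0 (lt_of_lt_of_le (by norm_num : (0:ℝ) < 0.7777) hcb)]
  · have hy4 : Real.pi/4 < y := by rw [ha] at hcase; linarith
    have hsl : Real.sin (a - Real.pi/3) ≤ a - Real.pi/3 := Real.sin_le (by linarith)
    have harg0 : 0 ≤ a - Real.pi/3 := by linarith
    have hkey : A * (Real.sin a - Real.sqrt 3 * Real.cos a)
        < B * (Real.sqrt 3 * Real.cos b + Real.sin b) := by
      have hstep : ∀ Ab aub : ℝ, A ≤ Ab → a - Real.pi/3 ≤ aub →
          A * (Real.sin a - Real.sqrt 3 * Real.cos a) ≤ Ab * (2*aub) := by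
        intro Ab aub h1 h2
        rw [hid]
        calc A * (2 * Real.sin (a - Real.pi/3)) ≤ A * (2*(a - Real.pi/3)) :=
              mul_le_mul_of_nonneg_left (by linarith) hA0.le
        _ ≤ Ab * (2*aub) := by
              apply mul_le_mul h1 (by linarith) (by linarith) (by linarith)
      rcases le_or_gt y 0.9 with hy9 | hy9
      · have hx : x < 0.62 := by nlinarith
        have hA4 : A ≤ (1/0.793)^4 := by
          have he : A = (Real.exp (x/3))^4 := by
            rw [hA, show 4*x/3 = (4:ℕ)*(x/3) by push_cast; ring, Real.exp_nat_mul]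
          rw [he]
          exact pow_le_pow_left₀ (Real.exp_nonneg _)
            (le_trans (expUB' (by linarith : x/3 ≤ 0.207) (by norm_num)) (by norm_num)) 4
        have hB1 : (0.5866:ℝ) ≤ B := by
          have := Real.add_one_le_exp (-(2*x)/3)
          nlinarith
        have haub : a - Real.pi/3 ≤ 0.152803 := by rw [ha]; nlinarith
        have hcb' : (0.82:ℝ) ≤ Real.cos b := by
          have := Real.one_sub_sq_div_two_le_cos (x := b)
          have hb6 : b ≤ 0.6 := by rw [hb]; linarith
          nlinarith
        have hRHS : (0.5866:ℝ) * (1.732 * 0.82) ≤ B * (Real.sqrt 3 * Real.cos b + Real.sin b) := by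
          have h1 : (1.732:ℝ) * 0.82 ≤ Real.sqrt 3 * Real.cos b + Real.sin b := by
            nlinarith
          calc (0.5866:ℝ) * (1.732 * 0.82) ≤ B * (1.732 * 0.82) := by
                apply mul_le_mul_of_nonneg_right hB1 (by norm_num)
          _ ≤ _ := mul_le_mul_of_nonneg_left h1 hB0.le
        calc A * (Real.sin a - Real.sqrt 3 * Real.cos a)
              ≤ (1/0.793)^4 * (2*0.152803) := hstep _ _ hA4 haub
          _ < (0.5866:ℝ) * (1.732 * 0.82) := by norm_num
          _ ≤ _ := hRHS
      · have hx : x < 0.44 := by nlinarith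
        have hA2 : A ≤ (1/0.706)^2 := by
          have he : A = (Real.exp (2*x/3))^2 := by
            rw [hA, show 4*x/3 = (2:ℕ)*(2*x/3) by push_cast; ring, Real.exp_nat_mul]
          rw [he]
          exact pow_le_pow_left₀ (Real.exp_nonneg _)
            (le_trans (expUB' (by linarith : 2*x/3 ≤ 0.294) (by norm_num)) (by norm_num)) 2
        have hB1 : (0.7066:ℝ) ≤ B := by
          have := Real.add_one_le_exp (-(2*x)/3)
          nlinarith
        have haub : a - Real.pi/3 ≤ 0.28614 := by rw [ha]; nlinarith
        have hbl : 0.6 < b := by rw [hb]; linarith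
        have hsinb' : (0.546:ℝ) ≤ Real.sin b := by
          have h1 := Real.sin_gt_sub_cube (by linarith : (0:ℝ) < b)
          nlinarith [mul_nonneg (by linarith : (0:ℝ) ≤ b - 0.6)
            (by nlinarith : (0:ℝ) ≤ 4 - (b^2 + 0.6*b + 0.36))]
        have hRHS : (0.7066:ℝ) * (1.732 * 0.7777 + 0.546)
            ≤ B * (Real.sqrt 3 * Real.cos b + Real.sin b) := by
          have h1 : (1.732:ℝ) * 0.7777 + 0.546 ≤ Real.sqrt 3 * Real.cos b + Real.sin b := by
            nlinarith
          calc (0.7066:ℝ) * (1.732 * 0.7777 + 0.546) ≤ B * (1.732 * 0.7777 + 0.546) := by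
                apply mul_le_mul_of_nonneg_right hB1 (by norm_num)
          _ ≤ _ := mul_le_mul_of_nonneg_left h1 hB0.le
        calc A * (Real.sin a - Real.sqrt 3 * Real.cos a)
              ≤ (1/0.706)^2 * (2*0.28614) := hstep _ _ hA2 haub
          _ < (0.7066:ℝ) * (1.732 * 0.7777 + 0.546) := by norm_num
          _ ≤ _ := hRHS
    nlinarith [hkey]

private lemma revIneqAux {x y : ℝ} (h : x^2 + y^2 < 1) (hy : 0 ≤ y) :
    Real.exp (-(2*x)/3) * Real.sin (2*y/3) - Real.exp (4*x/3) * Real.sin (4*y/3)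
      < Real.sqrt 3 * (Real.exp (4*x/3) * Real.cos (4*y/3) + Real.exp (-(2*x)/3) * Real.cos (2*y/3)) := by
  have hpi := Real.pi_gt_d6
  have hs3 := sqrt3_gt'
  have hy1 : y < 1 := by nlinarith [sq_nonneg x]
  have hA0 : 0 < Real.exp (4*x/3) := Real.exp_pos _
  have hB0 : 0 < Real.exp (-(2*x)/3) := Real.exp_pos _
  have hsina : 0 ≤ Real.sin (4*y/3) :=
    Real.sin_nonneg_of_nonneg_of_le_pi (by linarith) (by nlinarith)
  have hcosa : 0 < Real.cos (4*y/3) := by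
    apply Real.cos_pos_of_mem_Ioo
    constructor <;> nlinarith
  have hsinb : Real.sin (2*y/3) ≤ 2*y/3 := Real.sin_le (by linarith)
  have hcb : (0.7777:ℝ) ≤ Real.cos (2*y/3) := by
    have := Real.one_sub_sq_div_two_le_cos (x := 2*y/3)
    nlinarith
  have hkey : Real.sin (2*y/3) < Real.sqrt 3 * Real.cos (2*y/3) := by
    nlinarith
  nlinarith [mul_nonneg hA0.le hsina, mul_pos hA0 hcosa,
    mul_lt_mul_of_pos_left hkey hB0]

/-- the sector bound: both strict inequalities, any sign of y -/
private lemma sectorAux {x y : ℝ} (h : x^2 + y^2 < 1) :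
    |Real.exp (4*x/3) * Real.sin (4*y/3) - Real.exp (-(2*x)/3) * Real.sin (2*y/3)|
      < Real.sqrt 3 * (Real.exp (4*x/3) * Real.cos (4*y/3) + Real.exp (-(2*x)/3) * Real.cos (2*y/3)) := by
  rcases le_or_gt 0 y with hy | hy
  · rw [abs_lt]
    exact ⟨by nlinarith [revIneqAux h hy], mainIneqAux h hy⟩
  · have h' : x^2 + (-y)^2 < 1 := by nlinarith
    have hy' : 0 ≤ -y := by linarith
    have h1 := mainIneqAux h' hy'
    have h2 := revIneqAux h' hy'
    rw [show 4*(-y)/3 = -(4*y/3) by ring, show 2*(-y)/3 = -(2*y/3) by ring,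
      Real.sin_neg, Real.cos_neg, Real.sin_neg, Real.cos_neg] at h1 h2
    rw [abs_lt]
    constructor <;> nlinarith

/- ### Complex part -/

/-- v(z) = e^{4z/3} + e^{-2z/3}; note 1 + tanh z = 2 e^{4z/3} / v(z). -/
noncomputable def vB (z : ℂ) : ℂ :=
  Complex.exp (((4/3:ℝ):ℂ)*z) + Complex.exp (((-(2/3):ℝ):ℂ)*z)

private lemma vB_re (z : ℂ) : (vB z).re
    = Real.exp (4*z.re/3) * Real.cos (4*z.im/3)
      + Real.exp (-(2*z.re)/3) * Real.cos (2*z.im/3) := by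
  simp only [vB, Complex.add_re, Complex.exp_re, Complex.re_ofReal_mul, Complex.im_ofReal_mul]
  rw [show -(2/3:ℝ)*z.im = -(2*z.im/3) by ring, Real.cos_neg]
  ring_nf

private lemma vB_im (z : ℂ) : (vB z).im
    = Real.exp (4*z.re/3) * Real.sin (4*z.im/3)
      - Real.exp (-(2*z.re)/3) * Real.sin (2*z.im/3) := by
  simp only [vB, Complex.add_im, Complex.exp_im, Complex.re_ofReal_mul, Complex.im_ofReal_mul]
  rw [show -(2/3:ℝ)*z.im = -(2*z.im/3) by ring, Real.sin_neg]
  ring_nf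

private lemma sq_lt_one {z : ℂ} (hz : ‖z‖ < 1) : z.re^2 + z.im^2 < 1 := by
  have hz' : ‖z‖ < 1 := hz
  have h1 : Complex.normSq z < 1 := by
    rw [← Complex.sq_norm]
    nlinarith [norm_nonneg z]
  rw [Complex.normSq_apply] at h1
  nlinarith

private lemma vB_re_pos {z : ℂ} (hz : ‖z‖ < 1) : 0 < (vB z).re := by
  rw [vB_re]; exact rePosAux (sq_lt_one hz)

private lemma vB_ne_zero {z : ℂ} (hz : ‖z‖ < 1) : vB z ≠ 0 := by
  intro h0
  have := vB_re_pos hz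
  rw [h0] at this; simp at this

private lemma vB_sector {z : ℂ} (hz : ‖z‖ < 1) :
    |(vB z).im| < Real.sqrt 3 * (vB z).re := by
  rw [vB_re, vB_im]; exact sectorAux (sq_lt_one hz)

/-- 1 + tanh ζ = exp (log 2 + (4/3)ζ - log (vB ζ)) on the disk. -/
private lemma one_add_tanh {z : ℂ} (hz : ‖z‖ < 1) :
    1 + Complex.tanh z
      = Complex.exp (Complex.log 2 + ((4/3:ℝ):ℂ)*z - Complex.log (vB z)) := by
  have hv0 := vB_ne_zero hz
  have hvfac : vB z = Complex.exp (((1/3:ℝ):ℂ)*z) * (2 * Complex.cosh z) := by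
    simp only [vB, Complex.cosh]
    rw [show Complex.exp (((1/3:ℝ):ℂ)*z) * (2*((Complex.exp z + Complex.exp (-z))/2))
        = Complex.exp (((1/3:ℝ):ℂ)*z) * Complex.exp z
          + Complex.exp (((1/3:ℝ):ℂ)*z) * Complex.exp (-z) by ring,
      ← Complex.exp_add, ← Complex.exp_add]
    congr 1 <;> apply congrArg <;> push_cast <;> ring
  have hcosh0 : Complex.cosh z ≠ 0 := by
    intro h0; rw [hvfac, h0] at hv0; simp at hv0
  rw [Complex.tanh_eq_sinh_div_cosh]
  rw [Complex.exp_sub, Complex.exp_add, Complex.exp_log hv0,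
    Complex.exp_log (by norm_num : (2:ℂ) ≠ 0)]
  have h1 : (1:ℂ) + Complex.sinh z / Complex.cosh z = Complex.exp z / Complex.cosh z := by
    field_simp
    rw [Complex.cosh_add_sinh]
  rw [h1, hvfac]
  rw [div_eq_div_iff hcosh0 (by
    exact mul_ne_zero (Complex.exp_ne_zero _) (mul_ne_zero two_ne_zero hcosh0))]
  rw [show Complex.exp z * (Complex.exp (((1/3:ℝ):ℂ)*z) * (2*Complex.cosh z))
      = 2 * Complex.cosh z * (Complex.exp z * Complex.exp (((1/3:ℝ):ℂ)*z)) by ring,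
    ← Complex.exp_add]
  rw [show (2:ℂ) * Complex.exp (((4/3:ℝ):ℂ)*z) * Complex.cosh z
      = 2 * Complex.cosh z * Complex.exp (((4/3:ℝ):ℂ)*z) by ring]
  congr 1
  apply congrArg
  push_cast; ring

private lemma wIm_bounds {z : ℂ} (hz : ‖z‖ < 1) :
    -Real.pi < (Complex.log 2 + ((4/3:ℝ):ℂ)*z - Complex.log (vB z)).im ∧
    (Complex.log 2 + ((4/3:ℝ):ℂ)*z - Complex.log (vB z)).im ≤ Real.pi := by
  have hpi := Real.pi_gt_d6
  have harg : |Complex.arg (vB z)| < Real.pi/2 :=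
    Complex.abs_arg_lt_pi_div_two_iff.2 (Or.inl (vB_re_pos hz))
  have him : |z.im| ≤ ‖z‖ := Complex.abs_im_le_norm z
  have hz' : ‖z‖ < 1 := hz
  have hlog2 : (Complex.log 2).im = 0 := by
    rw [Complex.log_im, show (2:ℂ) = ((2:ℝ):ℂ) by norm_num,
      Complex.arg_ofReal_of_nonneg (by norm_num)]
  have hexp : (Complex.log 2 + ((4/3:ℝ):ℂ)*z - Complex.log (vB z)).im
      = (4/3)*z.im - Complex.arg (vB z) := by
    simp [Complex.add_im, Complex.sub_im, Complex.im_ofReal_mul, hlog2, Complex.log_im]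
  rw [hexp]
  cases' abs_lt.1 harg with h1 h2
  cases' abs_le.1 him with h3 h4
  constructor <;> nlinarith

/-- Re 𝔅'(z) > 0 on the unit disk. -/
theorem beanDerivRealPartPos :
    ∀ z : ℂ, ‖z‖ < 1 → 0 < (deriv Bean z).re := by
  intro z hz
  have hv0 := vB_ne_zero hz
  have hRe := vB_re_pos hz
  set c1 : ℂ := ((4/3:ℝ):ℂ) with hc1
  set c2 : ℂ := ((-(2/3):ℝ):ℂ) with hc2
  -- derivative of vB
  have h1 : HasDerivAt (fun ζ : ℂ => c1*ζ) c1 z := by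
    simpa using (hasDerivAt_id z).const_mul c1
  have h2 : HasDerivAt (fun ζ : ℂ => c2*ζ) c2 z := by
    simpa using (hasDerivAt_id z).const_mul c2
  have hv : HasDerivAt vB (Complex.exp (c1*z)*c1 + Complex.exp (c2*z)*c2) z :=
    h1.cexp.add h2.cexp
  have hlog := hv.clog (Or.inl hRe)
  have hw : HasDerivAt (fun ζ => Complex.log 2 + c1*ζ - Complex.log (vB ζ))
      (c1 - (Complex.exp (c1*z)*c1 + Complex.exp (c2*z)*c2)/vB z) z := by
    exact (h1.const_add (Complex.log 2)).sub hlog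
  have hf := (hw.const_mul ((1:ℂ)/2)).cexp
  have hBeanEq : Set.EqOn Bean
      (fun ζ => Complex.exp ((1:ℂ)/2 * (Complex.log 2 + c1*ζ - Complex.log (vB ζ))))
      (Metric.ball 0 1) := by
    intro ζ hζ
    have hζ' : ‖ζ‖ < 1 := by simpa [Metric.mem_ball, Complex.dist_eq] using hζ
    have he := one_add_tanh hζ'
    have hb := wIm_bounds hζ'
    simp only [Bean]
    rw [he, Complex.cpow_def_of_ne_zero (Complex.exp_ne_zero _),
      Complex.log_exp hb.1 hb.2,
      mul_comm (Complex.log 2 + c1*ζ - Complex.log (vB ζ)) ((1:ℂ)/2)]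
  have hmem : z ∈ Metric.ball (0:ℂ) 1 := by
    simpa [Metric.mem_ball, Complex.dist_eq] using hz
  have hderiv : deriv Bean z
      = Complex.exp ((1:ℂ)/2 * (Complex.log 2 + c1*z - Complex.log (vB z)))
        * ((1:ℂ)/2 * (c1 - (Complex.exp (c1*z)*c1 + Complex.exp (c2*z)*c2)/vB z)) := by
    have heq : Bean =ᶠ[nhds z]
        (fun ζ => Complex.exp ((1:ℂ)/2 * (Complex.log 2 + c1*ζ - Complex.log (vB ζ)))) :=
      Filter.eventuallyEq_of_mem (Metric.isOpen_ball.mem_nhds hmem) hBeanEq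
    rw [heq.deriv_eq, hf.deriv]
  -- algebra: deriv Bean z = √2 * t³ with t = exp(-(1/2) log (vB z))
  set t := Complex.exp (-((1:ℂ)/2) * Complex.log (vB z)) with htdef
  have ht2 : t*t = (vB z)⁻¹ := by
    rw [htdef, ← Complex.exp_add,
      show -((1:ℂ)/2)*Complex.log (vB z) + -((1:ℂ)/2)*Complex.log (vB z)
        = -(Complex.log (vB z)) by ring,
      Complex.exp_neg, Complex.exp_log hv0]
  have hlog2eq : Complex.log 2 = ((Real.log 2 : ℝ):ℂ) := by
    rw [show (2:ℂ) = ((2:ℝ):ℂ) by norm_num, ← Complex.ofReal_log (by norm_num : (0:ℝ) ≤ 2)]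
  have hsqrt2 : Complex.exp ((1:ℂ)/2 * Complex.log 2) = ((Real.sqrt 2 : ℝ):ℂ) := by
    rw [hlog2eq,
      show (1:ℂ)/2 * ((Real.log 2:ℝ):ℂ) = ((Real.log 2 / 2 : ℝ):ℂ) by push_cast; ring,
      ← Complex.ofReal_exp]
    congr 1
    rw [Real.sqrt_eq_rpow, Real.rpow_def_of_pos (by norm_num)]
    ring_nf
  have hsplit : Complex.exp ((1:ℂ)/2 * (Complex.log 2 + c1*z - Complex.log (vB z)))
      = Complex.exp ((1:ℂ)/2 * Complex.log 2) * (Complex.exp (((2/3:ℝ):ℂ)*z) * t) := by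
    rw [← Complex.exp_add, ← Complex.exp_add]
    apply congrArg
    rw [hc1]; push_cast; ring
  have hvsum : vB z = Complex.exp (c1*z) + Complex.exp (c2*z) := rfl
  have hfrac : (1:ℂ)/2 * (c1 - (Complex.exp (c1*z)*c1 + Complex.exp (c2*z)*c2)/vB z)
      = Complex.exp (c2*z) / vB z := by
    field_simp
    rw [hvsum, hc1, hc2]
    push_cast
    ring
  have hcomb : Complex.exp (((2/3:ℝ):ℂ)*z) * Complex.exp (c2*z) = 1 := by
    rw [← Complex.exp_add, show ((2/3:ℝ):ℂ)*z + c2*z = 0 by rw [hc2]; push_cast; ring,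
      Complex.exp_zero]
  have hfinal : deriv Bean z = ((Real.sqrt 2:ℝ):ℂ) * (t*(t*t)) := by
    rw [hderiv, hsplit, hfrac, hsqrt2, div_eq_mul_inv (Complex.exp (c2*z)) (vB z), ← ht2]
    linear_combination (((Real.sqrt 2:ℝ):ℂ) * t * t * t) * hcomb
  rw [hfinal, Complex.re_ofReal_mul]
  apply mul_pos (Real.sqrt_pos.2 (by norm_num : (0:ℝ) < 2))
  set p := t.re with hp'
  set q := t.im with hq'
  have hre3 : (t*(t*t)).re = p*(p*p - q*q) - q*(p*q + q*p) := by
    simp [Complex.mul_re, Complex.mul_im]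
    try ring
  have hhalf : -((1:ℂ)/2) = ((-(1/2):ℝ):ℂ) := by push_cast; ring
  have harglt : |Complex.arg (vB z)| < Real.pi/2 :=
    Complex.abs_arg_lt_pi_div_two_iff.2 (Or.inl hRe)
  have hpi := Real.pi_pos
  have hp0 : 0 < p := by
    rw [hp', htdef, Complex.exp_re, hhalf, Complex.im_ofReal_mul, Complex.log_im]
    apply mul_pos (Real.exp_pos _)
    apply Real.cos_pos_of_mem_Ioo
    cases' abs_lt.1 harglt with ha1 ha2
    constructor <;> simp <;> nlinarith
  have hns : 0 < Complex.normSq (vB z) := Complex.normSq_pos.2 hv0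
  have e1 : (p*p - q*q) * Complex.normSq (vB z) = (vB z).re := by
    have : ((vB z)⁻¹).re = p*p - q*q := by
      rw [← ht2]; simp [Complex.mul_re, hp', hq']
    rw [← this, Complex.inv_re]
    field_simp
  have e2 : (2*(p*q)) * Complex.normSq (vB z) = -(vB z).im := by
    have : ((vB z)⁻¹).im = p*q + q*p := by
      rw [← ht2]; simp [Complex.mul_im, hp', hq']
    rw [show (2:ℝ)*(p*q) = p*q + q*p by ring, ← this, Complex.inv_im]
    field_simp
  have hsec := vB_sector hz
  cases' abs_lt.1 hsec with hs1 hs2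
  have hs3 : (1.7:ℝ) < Real.sqrt 3 := by nlinarith [sqrt3_gt']
  have hs30 : 0 < Real.sqrt 3 := by linarith
  have hsq3 : Real.sqrt 3 * Real.sqrt 3 = 3 := Real.mul_self_sqrt (by norm_num)
  have hpp : 0 < p*p - q*q := by nlinarith [e1, hRe, hns]
  have h2pq : |2*(p*q)| < Real.sqrt 3 * (p*p - q*q) := by
    rw [abs_lt]
    constructor <;> nlinarith [mul_pos hns (mul_pos hs30 hpp)]
  have hfact : 0 < (Real.sqrt 3 * p + |q|) * (p - Real.sqrt 3 * |q|) := by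
    have habsq : |q| * |q| = q*q := abs_mul_abs_self q
    have hexpand : (Real.sqrt 3 * p + |q|) * (p - Real.sqrt 3 * |q|)
        = Real.sqrt 3 * (p*p - q*q) - 2*p*|q| := by
      linear_combination (-(p*|q|))*hsq3 + (-(Real.sqrt 3))*habsq
    have habs : 2*p*|q| ≤ |2*(p*q)| := by
      rw [abs_mul, abs_mul, abs_of_pos hp0, abs_of_pos (by norm_num : (0:ℝ) < 2)]
      linarith
    rw [hexpand]
    linarith
  have hq3 : 3*(q*q) < p*p := by
    have hpos1 : 0 < Real.sqrt 3 * p + |q| := by positivity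
    have hpos2 : 0 < p - Real.sqrt 3 * |q| := by
      rcases mul_pos_iff.1 hfact with ⟨_, h⟩ | ⟨h, _⟩
      · exact h
      · linarith
    nlinarith [mul_pos hpos2 (show 0 < p + Real.sqrt 3*|q| by positivity),
      hsq3, abs_mul_abs_self q]
  rw [hre3]
  nlinarith [mul_pos hp0 (show 0 < p*p - 3*(q*q) by linarith)]
end

section
/- For every complex number z with |z| ≤ 1, the modulus of 𝔅(z) = (1 + tanh z)^{1/2} satisfies |𝔅(z)| ≥ √(2/(1+e²)). (The bound is attained at z = −1.) -/
open Complex Metric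

lemma key_bound (z : ℂ) (hz : ‖z‖ ≤ 1) :
    2 / (1 + Real.exp 1 ^ 2) ≤ ‖1 + Complex.tanh z‖ := by
  have he1 : (1:ℝ) ≤ Real.exp 1 := by linarith [Real.add_one_le_exp (1:ℝ)]
  have hx : -1 ≤ z.re := by
    have := Complex.abs_re_le_norm z
    have : |z.re| ≤ 1 := le_trans this hz
    linarith [abs_le.mp this |>.1]
  by_cases h : Complex.cosh z = 0
  · rw [Complex.tanh_eq_sinh_div_cosh, h, div_zero, add_zero, norm_one,
      div_le_one (by positivity)]
    nlinarith
  · have h1 : 1 + Complex.tanh z = Complex.exp z / Complex.cosh z := by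
      rw [Complex.tanh_eq_sinh_div_cosh]
      field_simp
      exact Complex.cosh_add_sinh z
    rw [h1, norm_div, Complex.norm_exp]
    have hcosh : ‖Complex.cosh z‖ ≤ Real.cosh z.re := by
      rw [Complex.cosh, Real.cosh_eq]
      calc ‖(Complex.exp z + Complex.exp (-z)) / 2‖
          ≤ (‖Complex.exp z‖ + ‖Complex.exp (-z)‖) / 2 := by
            rw [norm_div]
            simp only [Complex.norm_two]
            gcongr
            exact norm_add_le _ _
        _ = (Real.exp z.re + Real.exp (-z.re)) / 2 := by
            rw [Complex.norm_exp, Complex.norm_exp, Complex.neg_re]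
    have hcpos : 0 < ‖Complex.cosh z‖ := by
      simpa using norm_pos_iff.mpr h
    have hcoshpos : 0 < Real.cosh z.re := Real.cosh_pos _
    have step1 : Real.exp z.re / Real.cosh z.re ≤ Real.exp z.re / ‖Complex.cosh z‖ := by
      gcongr
    refine le_trans ?_ step1
    rw [Real.cosh_eq, div_le_div_iff₀ (by positivity) (by positivity)]
    have hkey : Real.exp (-z.re) ≤ Real.exp 1 ^ 2 * Real.exp z.re := by
      rw [sq, ← Real.exp_add, ← Real.exp_add]
      exact Real.exp_le_exp.mpr (by linarith)
    nlinarith [Real.exp_pos z.re, Real.exp_pos (-z.re)]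

/-- |𝔅(z)| ≥ √(2/(1+e²)) for |z| ≤ 1. -/
theorem beanModulusLowerBound :
    ∀ z : ℂ, ‖z‖ ≤ 1 → Real.sqrt (2 / (1 + Real.exp 1 ^ 2)) ≤ ‖Bean z‖ := by
  intro z hz
  have key := key_bound z hz
  have hb : (0:ℝ) < 2 / (1 + Real.exp 1 ^ 2) := by positivity
  have hnorm : ‖Bean z‖ = ‖1 + Complex.tanh z‖ ^ ((1:ℝ)/2) := by
    rw [Bean, show ((1:ℂ)/2) = (((1:ℝ)/2 : ℝ) : ℂ) by norm_num,
      Complex.norm_cpow_real]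
  rw [hnorm, Real.sqrt_eq_rpow]
  exact Real.rpow_le_rpow hb.le key (by norm_num)
end

section
/- If p is analytic on 𝔻 and p ≺ 𝔅, then p ≺ exp, i.e. p is subordinate to the exponential function z ↦ e^z on 𝔻. (In class language: 𝒮*_𝔅 ⊂ 𝒮*_e.) -/
open Complex Metric

/- Auxiliary lemmas -/

lemma norm_cosh_sub_one_le {w : ℂ} (hw : ‖w‖ ≤ 1) :
    ‖Complex.cosh w - 1‖ ≤ 331/600 := by
  have hw' : ‖w‖ ≤ 1 := hw
  have hwn : ‖-w‖ ≤ 1 := by rwa [norm_neg]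
  have h1 := Complex.exp_bound hw' (n := 5) (by norm_num)
  have h2 := Complex.exp_bound hwn (n := 5) (by norm_num)
  have hsum : ∀ x : ℂ, ∑ m ∈ Finset.range 5, x ^ m / m.factorial
      = 1 + x + x^2/2 + x^3/6 + x^4/24 := by
    intro x
    simp [Finset.sum_range_succ, Nat.factorial]
    try ring
  rw [hsum] at h1
  rw [hsum] at h2
  have key : Complex.cosh w - 1 =
      ((Complex.exp w - (1 + w + w^2/2 + w^3/6 + w^4/24))
        + (Complex.exp (-w) - (1 + (-w) + (-w)^2/2 + (-w)^3/6 + (-w)^4/24)))/2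
      + w^2/2 + w^4/24 := by
    rw [Complex.cosh]
    ring
  rw [key]
  have hn5 : ‖w‖ ^ 5 ≤ 1 := pow_le_one₀ (norm_nonneg _) hw'
  have hn2 : ‖w‖ ^ 2 ≤ 1 := pow_le_one₀ (norm_nonneg _) hw'
  have hn4 : ‖w‖ ^ 4 ≤ 1 := pow_le_one₀ (norm_nonneg _) hw'
  rw [norm_neg] at h2
  calc ‖((Complex.exp w - (1 + w + w^2/2 + w^3/6 + w^4/24))
        + (Complex.exp (-w) - (1 + (-w) + (-w)^2/2 + (-w)^3/6 + (-w)^4/24)))/2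
      + w^2/2 + w^4/24‖
      ≤ (‖Complex.exp w - (1 + w + w^2/2 + w^3/6 + w^4/24)‖
          + ‖Complex.exp (-w) - (1 + (-w) + (-w)^2/2 + (-w)^3/6 + (-w)^4/24)‖)/2
        + ‖w‖ ^ 2 / 2 + ‖w‖ ^ 4 / 24 := by
        have t1 := norm_add_le
          (((Complex.exp w - (1 + w + w^2/2 + w^3/6 + w^4/24))
        + (Complex.exp (-w) - (1 + (-w) + (-w)^2/2 + (-w)^3/6 + (-w)^4/24)))/2 + w^2/2) (w^4/24)
        have t2 := norm_add_le
          (((Complex.exp w - (1 + w + w^2/2 + w^3/6 + w^4/24))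
        + (Complex.exp (-w) - (1 + (-w) + (-w)^2/2 + (-w)^3/6 + (-w)^4/24)))/2) (w^2/2)
        have t3 := norm_add_le
          (Complex.exp w - (1 + w + w^2/2 + w^3/6 + w^4/24))
          (Complex.exp (-w) - (1 + (-w) + (-w)^2/2 + (-w)^3/6 + (-w)^4/24))
        simp only [norm_div, norm_pow, Complex.norm_ofNat] at *
        norm_num at *
        linarith
    _ ≤ (‖w‖ ^ 5 * (6 * ((120:ℝ) * 5)⁻¹)
          + ‖w‖ ^ 5 * (6 * ((120:ℝ) * 5)⁻¹))/2 + 1/2 + 1/24 := by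
        norm_num [Nat.factorial] at h1 h2 ⊢
        linarith
    _ ≤ 331/600 := by nlinarith

lemma norm_log_cosh_le {w : ℂ} (hw : ‖w‖ ≤ 1) :
    ‖Complex.log (Complex.cosh w)‖ ≤ 9/10 := by
  set c := Complex.cosh w - 1 with hc
  have hcb : ‖c‖ ≤ 331/600 := norm_cosh_sub_one_le hw
  have hclt : ‖c‖ < 1 := lt_of_le_of_lt hcb (by norm_num)
  have hcosh : Complex.cosh w = 1 + c := by rw [hc]; ring
  rw [hcosh]
  have hb := Complex.norm_log_one_add_le hclt
  have hnn : (0:ℝ) ≤ ‖c‖ := norm_nonneg _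
  have hinv : (1 - ‖c‖)⁻¹ ≤ 600/269 := by
    rw [inv_le_comm₀ (by linarith) (by norm_num)]
    linarith
  calc ‖Complex.log (1 + c)‖ ≤ ‖c‖ ^ 2 * (1 - ‖c‖)⁻¹ / 2 + ‖c‖ := hb
    _ ≤ 9/10 := by nlinarith [sq_nonneg ‖c‖]

lemma cosh_re_pos {w : ℂ} (hw : ‖w‖ ≤ 1) : 0 < (Complex.cosh w).re := by
  have him : |w.im| ≤ 1 := le_trans (Complex.abs_im_le_norm w) hw
  have hcos : 0 < Real.cos w.im := by
    refine Real.cos_pos_of_mem_Ioo ⟨?_, ?_⟩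
    · nlinarith [Real.pi_gt_three, abs_le.mp him]
    · nlinarith [Real.pi_gt_three, abs_le.mp him]
  have h1 : (Complex.cosh w).re = ((Complex.exp w).re + (Complex.exp (-w)).re) / 2 := by
    rw [Complex.cosh]
    simp [Complex.div_re]
    try ring
  rw [h1, Complex.exp_re, Complex.exp_re]
  simp only [Complex.neg_re, Complex.neg_im, Real.cos_neg]
  positivity

lemma cosh_ne_zero {w : ℂ} (hw : ‖w‖ ≤ 1) : Complex.cosh w ≠ 0 := by
  intro h
  have := cosh_re_pos hw
  rw [h] at this
  simp at this

lemma bean_eq_exp {w : ℂ} (hw : ‖w‖ ≤ 1) :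
    Bean w = Complex.exp ((w - Complex.log (Complex.cosh w)) / 2) := by
  have hcne := cosh_ne_zero hw
  have h1 : 1 + Complex.tanh w = Complex.exp w / Complex.cosh w := by
    rw [Complex.tanh_eq_sinh_div_cosh]
    field_simp
    try rw [Complex.cosh_add_sinh]
    try rw [add_comm, Complex.cosh_add_sinh]
  have h2 : Complex.exp w / Complex.cosh w
      = Complex.exp (w - Complex.log (Complex.cosh w)) := by
    rw [Complex.exp_sub, Complex.exp_log hcne]
  have hbnd : ‖w - Complex.log (Complex.cosh w)‖ ≤ 19/10 := by
    calc ‖w - Complex.log (Complex.cosh w)‖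
        ≤ ‖w‖ + ‖Complex.log (Complex.cosh w)‖ := norm_sub_le _ _
      _ ≤ 1 + 9/10 := add_le_add hw (norm_log_cosh_le hw)
      _ = 19/10 := by norm_num
  have him : |(w - Complex.log (Complex.cosh w)).im| ≤ 19/10 :=
    le_trans (Complex.abs_im_le_norm _) hbnd
  have him' := abs_le.mp him
  have h3 : Complex.log (1 + Complex.tanh w) = w - Complex.log (Complex.cosh w) := by
    rw [h1, h2, Complex.log_exp (by nlinarith [Real.pi_gt_three]) (by nlinarith [Real.pi_gt_three])]
  have hne : 1 + Complex.tanh w ≠ 0 := by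
    rw [h1]
    exact div_ne_zero (Complex.exp_ne_zero w) hcne
  rw [Bean, Complex.cpow_def_of_ne_zero hne, h3]
  congr 1
  ring

/-- p ≺ 𝔅 implies p ≺ exp (i.e. 𝒮*_𝔅 ⊂ 𝒮*_e). -/
theorem beanSubsetExp (p : ℂ → ℂ) (hp : AnalyticOnNhd ℂ p unitDisk)
    (hsub : Subord p Bean) : Subord p Complex.exp := by
  obtain ⟨ω, hωa, hω0, hωlt, hωeq⟩ := hsub
  refine ⟨fun z => (ω z - Complex.log (Complex.cosh (ω z))) / 2, ?_, ?_, ?_, ?_⟩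
  · intro z hz
    have hωz := hωa z hz
    have hslit : Complex.cosh (ω z) ∈ Complex.slitPlane :=
      Or.inl (cosh_re_pos (le_of_lt (hωlt z hz)))
    have hcosh : AnalyticAt ℂ Complex.cosh (ω z) :=
      Complex.differentiable_cosh.analyticAt _
    have hlog : AnalyticAt ℂ (fun u => Complex.log (Complex.cosh (ω u))) z :=
      (hcosh.comp hωz).clog hslit
    exact ((hωz.sub hlog).div analyticAt_const (by norm_num))
  · simp [hω0]
  · intro z hz
    have h1 := hωlt z hz
    have h2 := norm_log_cosh_le (le_of_lt h1)
    calc ‖(ω z - Complex.log (Complex.cosh (ω z))) / 2‖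
        = ‖ω z - Complex.log (Complex.cosh (ω z))‖ / 2 := by
          rw [norm_div]; norm_num
      _ ≤ (‖ω z‖ + ‖Complex.log (Complex.cosh (ω z))‖) / 2 := by
          gcongr; exact norm_sub_le _ _
      _ < 1 := by linarith
  · intro z hz
    rw [hωeq z hz, bean_eq_exp (le_of_lt (hωlt z hz))]
end

section
/- Let k be a real number with k ≥ 2e/(2e − √(2(1+e²))). If p is analytic on 𝔻 with p(0) = 1 and Re p(z) > k·|p(z) − 1| for every z ∈ 𝔻, then p ≺ 𝔅. (In class language: k-𝒮𝒯 ⊂ 𝒮*_𝔅 for k ≥ 2e/(2e − √(2(1+e²))).) -/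
open Complex Metric

private lemma norm_log_sub_log_le {s : ℂ} (h : ‖s‖ < 1) :
    ‖Complex.log (1 + s) - Complex.log (1 - s)‖
      ≤ Real.log (1 + ‖s‖) - Real.log (1 - ‖s‖) := by
  set σ := ‖s‖ with hσdef
  have hσ0 : 0 ≤ σ := norm_nonneg s
  have hσc : ‖(σ : ℂ)‖ < 1 := by
    simpa [Complex.norm_real, _root_.abs_of_nonneg hσ0] using h
  have hF : HasSum (fun n : ℕ => (-1) ^ (n+1) * s ^ n / n + s ^ n / n)
      (Complex.log (1 + s) - Complex.log (1 - s)) := by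
    simpa [sub_eq_add_neg] using
      (Complex.hasSum_taylorSeries_log h).add (Complex.hasSum_taylorSeries_neg_log h)
  have hGc : HasSum (fun n : ℕ => (-1) ^ (n+1) * (σ:ℂ) ^ n / n + (σ:ℂ) ^ n / n)
      (Complex.log (1 + (σ:ℂ)) - Complex.log (1 - (σ:ℂ))) := by
    simpa [sub_eq_add_neg] using
      (Complex.hasSum_taylorSeries_log hσc).add (Complex.hasSum_taylorSeries_neg_log hσc)
  have hG : HasSum (fun n : ℕ => (-1) ^ (n+1) * σ ^ n / n + σ ^ n / n)
      (Real.log (1 + σ) - Real.log (1 - σ)) := by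
    rw [← Complex.hasSum_ofReal]
    convert hGc using 1
    · funext n; push_cast; ring
    · rw [Complex.ofReal_sub,
        Complex.ofReal_log (by linarith : (0:ℝ) ≤ 1 + σ),
        Complex.ofReal_log (by linarith : (0:ℝ) ≤ 1 - σ)]
      push_cast
      ring_nf
  have hFG : ∀ n : ℕ, ‖(-1) ^ (n+1) * s ^ n / n + s ^ n / n‖
      ≤ (-1) ^ (n+1) * σ ^ n / n + σ ^ n / n := by
    intro n
    rcases Nat.even_or_odd n with he | ho
    · have h1 : ((-1:ℂ)) ^ (n+1) = -1 := Odd.neg_one_pow he.add_one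
      have h2 : ((-1:ℝ)) ^ (n+1) = -1 := Odd.neg_one_pow he.add_one
      simp [h1, h2, neg_div, neg_one_mul]
    · have h1 : ((-1:ℂ)) ^ (n+1) = 1 := Even.neg_one_pow ho.add_one
      have h2 : ((-1:ℝ)) ^ (n+1) = 1 := Even.neg_one_pow ho.add_one
      rw [h1, h2, one_mul, one_mul]
      calc ‖s ^ n / (n:ℂ) + s ^ n / n‖ ≤ ‖s ^ n / (n:ℂ)‖ + ‖s ^ n / (n:ℂ)‖ := norm_add_le _ _
        _ = σ ^ n / n + σ ^ n / n := by
            rw [norm_div, norm_pow, Complex.norm_natCast]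
  have hsumG := hG.summable
  have hsumF : Summable (fun n : ℕ => ‖(-1) ^ (n+1) * s ^ n / n + s ^ n / n‖) :=
    Summable.of_nonneg_of_le (fun n => norm_nonneg _) hFG hsumG
  calc ‖Complex.log (1 + s) - Complex.log (1 - s)‖
      = ‖∑' n : ℕ, ((-1) ^ (n+1) * s ^ n / n + s ^ n / n)‖ := by rw [hF.tsum_eq]
    _ ≤ ∑' n : ℕ, ‖(-1) ^ (n+1) * s ^ n / n + s ^ n / n‖ := norm_tsum_le_tsum_norm hsumF
    _ ≤ ∑' n : ℕ, ((-1) ^ (n+1) * σ ^ n / n + σ ^ n / n) := Summable.tsum_le_tsum hFG hsumF hsumG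
    _ = _ := hG.tsum_eq

set_option maxHeartbeats 1000000 in
/-- k-𝒮𝒯 ⊂ 𝒮*_𝔅 for k ≥ 2e/(2e − √(2(1+e²))). -/
theorem kStarlikeSubsetBean (k : ℝ)
    (hk : 2 * Real.exp 1 / (2 * Real.exp 1 - Real.sqrt (2 * (1 + Real.exp 1 ^ 2))) ≤ k)
    (p : ℂ → ℂ) (hp : AnalyticOnNhd ℂ p unitDisk) (hp0 : p 0 = 1)
    (hre : ∀ z ∈ unitDisk, k * ‖p z - 1‖ < (p z).re) :
    Subord p Bean := by
  have hepos : (0:ℝ) < Real.exp 1 := Real.exp_pos 1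
  have he1lt : (1:ℝ) < Real.exp 1 := by
    have := Real.exp_lt_exp (x := 0) (y := 1)
    simpa [Real.exp_zero] using this.mpr one_pos
  obtain ⟨E, hE⟩ : ∃ E, E = Real.exp 1 ^ 2 := ⟨_, rfl⟩
  have hE1 : 1 < E := by rw [hE]; nlinarith
  obtain ⟨s0, hs0⟩ : ∃ s, s = Real.sqrt (2 * (1 + Real.exp 1 ^ 2)) := ⟨_, rfl⟩
  rw [← hs0] at hk
  have hs0pos : 0 < s0 := by rw [hs0]; exact Real.sqrt_pos.mpr (by nlinarith)
  have hs0sq : s0 ^ 2 = 2 * (1 + E) := by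
    rw [hs0, Real.sq_sqrt (by nlinarith : (0:ℝ) ≤ 2 * (1 + Real.exp 1 ^ 2)), hE]
  have hs0lt : s0 < 2 * Real.exp 1 := by nlinarith [hs0sq, hs0pos, hE1]
  have hd : 0 < 2 * Real.exp 1 - s0 := by linarith
  have hk1 : 1 < k := lt_of_lt_of_le ((one_lt_div hd).mpr (by linarith)) hk
  obtain ⟨r, hr⟩ : ∃ r, r = 2 * Real.exp 1 / s0 - 1 := ⟨_, rfl⟩
  have hrpos : 0 < r := by
    have : 1 < 2 * Real.exp 1 / s0 := (one_lt_div hs0pos).mpr hs0lt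
    rw [hr]; linarith
  have hkr : 1 / (k - 1) ≤ r := by
    have heq : 2 * Real.exp 1 / (2 * Real.exp 1 - s0) - 1 = s0 / (2 * Real.exp 1 - s0) := by
      field_simp
      ring
    have h1 : s0 / (2 * Real.exp 1 - s0) ≤ k - 1 := by
      have := hk; linarith [heq]
    have h2 : 0 < s0 / (2 * Real.exp 1 - s0) := div_pos hs0pos hd
    have h3 := one_div_le_one_div_of_le h2 h1
    have h4 : 1 / (s0 / (2 * Real.exp 1 - s0)) = r := by
      rw [one_div_div, hr]; field_simp
    linarith [h3, h4.le, h4.ge]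
  have hq : (r + 1) ^ 2 = 2 * E / (1 + E) := by
    have h0 : r + 1 = 2 * Real.exp 1 / s0 := by rw [hr]; ring
    rw [h0, div_pow, hs0sq, div_eq_div_iff (by nlinarith) (by nlinarith)]
    rw [hE]; ring
  have hrrE : r * (r + 2) = (E - 1) / (E + 1) := by
    have h1 : r * (r + 2) = (r + 1) ^ 2 - 1 := by ring
    rw [h1, hq, div_sub' (by nlinarith : (1:ℝ) + E ≠ 0)]
    rw [div_eq_div_iff (by nlinarith) (by nlinarith)]
    ring
  have hEfrac1 : (E - 1) / (E + 1) < 1 := by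
    rw [div_lt_one (by nlinarith)]; linarith
  -- pointwise bounds on p
  have key : ∀ z ∈ unitDisk, ‖p z - 1‖ < r ∧ 0 < (p z).re := by
    intro z hz
    have h1 := hre z hz
    have h2 : (p z).re ≤ ‖p z‖ := by
      simpa using Complex.re_le_norm (p z)
    have h3 : ‖p z‖ ≤ ‖p z - 1‖ + 1 := by
      calc ‖p z‖ = ‖(p z - 1) + 1‖ := by ring_nf
        _ ≤ ‖p z - 1‖ + ‖(1:ℂ)‖ := norm_add_le _ _
        _ = ‖p z - 1‖ + 1 := by simp
    have ht : (k - 1) * ‖p z - 1‖ < 1 := by nlinarith [norm_nonneg (p z - 1)]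
    have htr : ‖p z - 1‖ < r := by
      have h5 : ‖p z - 1‖ < 1 / (k - 1) := by
        rw [lt_div_iff₀ (by linarith : (0:ℝ) < k - 1)]
        nlinarith
      exact h5.trans_le hkr
    refine ⟨htr, ?_⟩
    rcases eq_or_ne (p z) 1 with hpz | hpz
    · simp [hpz]
    · have h6 : 0 < ‖p z - 1‖ := norm_sub_pos_iff.mpr hpz
      have h7 : 0 < k * ‖p z - 1‖ := mul_pos (by linarith) h6
      linarith
  have facts : ∀ z ∈ unitDisk,
      0 < (p z ^ 2).re ∧ 0 < ((2:ℂ) - p z ^ 2).re ∧ ‖p z ^ 2 - 1‖ < (E - 1) / (E + 1) := by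
    intro z hz
    obtain ⟨h1, _⟩ := key z hz
    have h2 : ‖p z ^ 2 - 1‖ ≤ ‖p z - 1‖ * (‖p z - 1‖ + 2) := by
      have heq : p z ^ 2 - 1 = (p z - 1) * ((p z - 1) + 2) := by ring
      rw [heq, norm_mul]
      refine mul_le_mul_of_nonneg_left ?_ (norm_nonneg _)
      calc ‖(p z - 1) + 2‖ ≤ ‖p z - 1‖ + ‖(2:ℂ)‖ := norm_add_le _ _
        _ = ‖p z - 1‖ + 2 := by norm_num
    have h3 : ‖p z - 1‖ * (‖p z - 1‖ + 2) < r * (r + 2) := by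
      nlinarith [norm_nonneg (p z - 1)]
    have hσ : ‖p z ^ 2 - 1‖ < (E - 1) / (E + 1) := by rw [← hrrE]; linarith
    have hσ1 : ‖p z ^ 2 - 1‖ < 1 := hσ.trans hEfrac1
    have hsre : |(p z ^ 2 - 1).re| ≤ ‖p z ^ 2 - 1‖ := by
      exact Complex.abs_re_le_norm (p z ^ 2 - 1)
    have hsre' := abs_le.mp hsre
    have hre1 : (p z ^ 2).re = 1 + (p z ^ 2 - 1).re := by
      simp [Complex.sub_re, Complex.one_re]
    have hre2 : ((2:ℂ) - p z ^ 2).re = 1 - (p z ^ 2 - 1).re := by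
      simp only [Complex.sub_re, Complex.one_re, Complex.re_ofNat]
      ring
    constructor
    · rw [hre1]; linarith
    constructor
    · rw [hre2]; linarith
    · exact hσ
  refine ⟨fun z => (Complex.log (p z ^ 2) - Complex.log (2 - p z ^ 2)) / 2, ?_, ?_, ?_, ?_⟩
  · -- analyticity
    intro z hz
    obtain ⟨ha, hb, -⟩ := facts z hz
    have h1 : AnalyticAt ℂ (fun z => p z ^ 2) z := (hp z hz).pow 2
    have h2 : AnalyticAt ℂ (fun z => (2:ℂ) - p z ^ 2) z := analyticAt_const.sub h1
    have h3 : AnalyticAt ℂ (fun z => Complex.log (p z ^ 2)) z :=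
      h1.clog (Complex.mem_slitPlane_iff.mpr (Or.inl ha))
    have h4 : AnalyticAt ℂ (fun z => Complex.log ((2:ℂ) - p z ^ 2)) z :=
      h2.clog (Complex.mem_slitPlane_iff.mpr (Or.inl hb))
    exact (h3.sub h4).div analyticAt_const (by norm_num)
  · -- value at 0
    show (Complex.log (p 0 ^ 2) - Complex.log (2 - p 0 ^ 2)) / 2 = 0
    rw [hp0]; norm_num [Complex.log_one]
  · -- norm bound
    intro z hz
    obtain ⟨-, -, hσ⟩ := facts z hz
    have hσ1 : ‖p z ^ 2 - 1‖ < 1 := hσ.trans hEfrac1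
    have hbound := norm_log_sub_log_le hσ1
    have heq1 : (1:ℂ) + (p z ^ 2 - 1) = p z ^ 2 := by ring
    have heq2 : (1:ℂ) - (p z ^ 2 - 1) = 2 - p z ^ 2 := by ring
    rw [heq1, heq2] at hbound
    obtain ⟨σ, hσdef⟩ : ∃ x, x = ‖p z ^ 2 - 1‖ := ⟨_, rfl⟩
    rw [← hσdef] at hbound hσ hσ1
    have hσ0 : 0 ≤ σ := hσdef ▸ norm_nonneg _
    have hσlt1 : σ < 1 := hσ1
    have hlog : Real.log (1 + σ) - Real.log (1 - σ) < 2 := by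
      have hEp : (0:ℝ) < E + 1 := by linarith
      have hmul : σ * (E + 1) < E - 1 := (lt_div_iff₀ hEp).mp hσ
      have hE1σ : 1 + σ < E * (1 - σ) := by nlinarith
      have h1σ : (0:ℝ) < 1 - σ := by linarith
      have hlt := Real.log_lt_log (by linarith : (0:ℝ) < 1 + σ) hE1σ
      rw [Real.log_mul (by nlinarith) (by linarith)] at hlt
      have hlogE : Real.log E = 2 := by
        rw [hE, Real.log_pow, Real.log_exp]; norm_num
      linarith
    have h2n : ‖(2:ℂ)‖ = 2 := by norm_num
    rw [norm_div, h2n]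
    linarith
  · -- p z = Bean (ω z)
    intro z hz
    obtain ⟨ha, hb, hσ⟩ := facts z hz
    have hwre : 0 < (p z).re := (key z hz).2
    have hane : (p z ^ 2 : ℂ) ≠ 0 := fun h0 => by simp [h0] at ha
    have hbne : ((2:ℂ) - p z ^ 2) ≠ 0 := fun h0 => by simp [h0] at hb
    set ωz := (Complex.log (p z ^ 2) - Complex.log (2 - p z ^ 2)) / 2 with hωz
    have hexp2 : Complex.exp ωz ^ 2 = p z ^ 2 / (2 - p z ^ 2) := by
      rw [pow_two, ← Complex.exp_add]
      have h5 : ωz + ωz = Complex.log (p z ^ 2) - Complex.log (2 - p z ^ 2) := by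
        rw [hωz]; ring
      rw [h5, Complex.exp_sub, Complex.exp_log hane, Complex.exp_log hbne]
    have hu : Complex.exp ωz ≠ 0 := Complex.exp_ne_zero ωz
    have hsum : (2 - p z ^ 2) * Complex.exp ωz ^ 2 = p z ^ 2 := by
      rw [hexp2]; field_simp
    have hcosh : Complex.cosh ωz ≠ 0 := by
      simp only [Complex.cosh, Complex.exp_neg]
      intro h0
      have h1 : Complex.exp ωz ^ 2 + 1 = 0 := by
        have h2 : Complex.exp ωz ^ 2 + 1
            = Complex.exp ωz * ((Complex.exp ωz + (Complex.exp ωz)⁻¹) / 2) * 2 := by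
          field_simp
        rw [h2, h0, mul_zero, zero_mul]
      have h3 : (2:ℂ) = 0 := by
        linear_combination (2 - p z ^ 2) * h1 - hsum
      norm_num at h3
    have htanh : Complex.tanh ωz = p z ^ 2 - 1 := by
      rw [Complex.tanh_eq_sinh_div_cosh, div_eq_iff hcosh]
      simp only [Complex.sinh, Complex.cosh, Complex.exp_neg]
      field_simp
      linear_combination hsum
    show p z = Bean ωz
    rw [show Bean ωz = (1 + Complex.tanh ωz) ^ ((1:ℂ)/2) from rfl, htanh]
    have h6 : (1:ℂ) + (p z ^ 2 - 1) = p z ^ 2 := by ring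
    rw [h6, one_div]
    exact (Complex.sq_cpow_two_inv hwre).symm
end

section
/- Let c be a real number with 0 < c < (e² − 1)/(e² + 1). If p is analytic on 𝔻 and p ≺ (1 + cz)^{1/2} (principal square root), then p ≺ 𝔅. (In class language: 𝒮*(q_c) ⊂ 𝒮*_𝔅 for 0 < c < (e²−1)/(e²+1), where q_c(z) = √(1+cz) is associated with the Cassinian ovals.) -/
open Complex Metric

theorem tanh_artanh (v : ℂ) (h1 : 1 + v ≠ 0) (h2 : 1 - v ≠ 0) :
    Complex.tanh ((1/2) * (Complex.log (1+v) - Complex.log (1-v))) = v := by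
  set w : ℂ := (1/2) * (Complex.log (1+v) - Complex.log (1-v)) with hw
  have hE : Complex.exp w ≠ 0 := Complex.exp_ne_zero w
  have hE2 : Complex.exp w ^ 2 * (1 - v) = 1 + v := by
    have : Complex.exp w ^ 2 = (1+v)/(1-v) := by
      rw [sq, ← Complex.exp_add]
      have hww : w + w = Complex.log (1+v) - Complex.log (1-v) := by rw [hw]; ring
      rw [hww, Complex.exp_sub, Complex.exp_log h1, Complex.exp_log h2]
    rw [this]; field_simp
  have hden : Complex.exp w ^ 2 + 1 ≠ 0 := by
    intro h
    apply two_ne_zero (α := ℂ)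
    linear_combination (1-v) * h - hE2
  have hne : Complex.exp w + (Complex.exp w)⁻¹ ≠ 0 := by
    intro h
    apply hden
    field_simp at h
    linear_combination h
  rw [Complex.tanh_eq_sinh_div_cosh]
  simp only [Complex.sinh, Complex.cosh, Complex.exp_neg]
  rw [div_div_div_comm, div_self (two_ne_zero), div_one, div_eq_iff hne]
  field_simp
  linear_combination hE2

theorem norm_log_sub_log (v : ℂ) (hv : ‖v‖ < 1) :
    ‖Complex.log (1+v) - Complex.log (1-v)‖
      ≤ Real.log (1+‖v‖) - Real.log (1-‖v‖) := by
  set r : ℝ := ‖v‖ with hr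
  have hr0 : 0 ≤ r := norm_nonneg v
  have hrC : ‖(r:ℂ)‖ < 1 := by
    rwa [Complex.norm_real, Real.norm_eq_abs, _root_.abs_of_nonneg hr0]
  have hT : HasSum (fun n : ℕ => (-1)^(n+1) * v^n/n + v^n/n)
      (Complex.log (1+v) - Complex.log (1-v)) := by
    have := (Complex.hasSum_taylorSeries_log hv).add
      (Complex.hasSum_taylorSeries_neg_log hv)
    simpa [sub_eq_add_neg] using this
  have hgC : HasSum (fun n : ℕ => (-1:ℂ)^(n+1) * (r:ℂ)^n/n + (r:ℂ)^n/n)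
      (Complex.log (1+(r:ℂ)) - Complex.log (1-(r:ℂ))) := by
    have := (Complex.hasSum_taylorSeries_log hrC).add
      (Complex.hasSum_taylorSeries_neg_log hrC)
    simpa [sub_eq_add_neg] using this
  have hg : HasSum (fun n : ℕ => (-1:ℝ)^(n+1) * r^n/n + r^n/n)
      (Real.log (1+r) - Real.log (1-r)) := by
    rw [← hasSum_ofReal]
    convert hgC using 1
    · ext n; push_cast; ring
    · push_cast [Complex.ofReal_log (by linarith : (0:ℝ) ≤ 1+r),
        Complex.ofReal_log (by linarith : (0:ℝ) ≤ 1-r)]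
      ring
  rw [← hT.tsum_eq]
  refine tsum_of_norm_bounded hg ?_
  intro n
  rcases Nat.even_or_odd n with he | ho
  · have h1 : ((-1:ℂ))^(n+1) = -1 := (he.add_one).neg_one_pow
    have h2 : ((-1:ℝ))^(n+1) = -1 := (he.add_one).neg_one_pow
    rw [h1, h2, neg_one_mul, neg_one_mul, neg_div, neg_add_cancel, neg_div,
      neg_add_cancel, norm_zero]
  · have h1 : ((-1:ℂ))^(n+1) = 1 := (ho.add_one).neg_one_pow
    have h2 : ((-1:ℝ))^(n+1) = 1 := (ho.add_one).neg_one_pow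
    rw [h1, h2, one_mul, one_mul, ← two_mul, ← two_mul]
    rw [norm_mul, norm_div, norm_pow]
    simp [hr]

theorem one_add_slit {u : ℂ} (hu : ‖u‖ < 1) : 1 + u ∈ Complex.slitPlane := by
  rw [Complex.mem_slitPlane_iff]
  left
  have := Complex.abs_re_le_norm u
  have : -‖u‖ ≤ u.re := by cases abs_le.mp this; linarith
  simp only [Complex.add_re, Complex.one_re]
  linarith

theorem one_add_ne {u : ℂ} (hu : ‖u‖ < 1) : 1 + u ≠ 0 := by
  intro h
  have : u = -1 := by linear_combination h
  rw [this] at hu; simp at hu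


/-- 𝒮*(q_c) ⊂ 𝒮*_𝔅 for 0 < c < (e²−1)/(e²+1). -/
theorem cassinianSubsetBean (c : ℝ) (hc0 : 0 < c)
    (hc1 : c < (Real.exp 1 ^ 2 - 1) / (Real.exp 1 ^ 2 + 1))
    (p : ℂ → ℂ) (hp : AnalyticOnNhd ℂ p unitDisk)
    (hsub : Subord p (fun z => (1 + (c:ℂ)*z) ^ ((1:ℂ)/2))) :
    Subord p Bean := by
  obtain ⟨ω₀, hωa, hω0, hωn, hωe⟩ := hsub
  have h1e : (1:ℝ) < Real.exp 1 := by
    have := Real.exp_one_gt_d9; linarith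
  have hE1 : (1:ℝ) < Real.exp 1 ^ 2 := by nlinarith
  have hc1' : c < 1 := lt_trans hc1 (by rw [div_lt_one (by linarith)]; linarith)
  have hclog : Real.log (1+c) - Real.log (1-c) < 2 := by
    have hq : (1+c)/(1-c) < Real.exp 2 := by
      have h2 : Real.exp 2 = Real.exp 1 ^ 2 := by
        rw [show (2:ℝ) = 1+1 by norm_num, Real.exp_add, sq]
      rw [h2, div_lt_iff₀ (by linarith)]
      rw [lt_div_iff₀ (by linarith)] at hc1
      nlinarith
    have := Real.log_lt_log (div_pos (by linarith) (by linarith)) hq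
    rwa [Real.log_div (by linarith) (by linarith), Real.log_exp] at this
  -- the witness
  set v : ℂ → ℂ := fun z => (c:ℂ) * ω₀ z with hv
  have hvn : ∀ z ∈ unitDisk, ‖v z‖ < c := by
    intro z hz
    have : ‖v z‖ = c * ‖ω₀ z‖ := by
      rw [hv]; simp [abs_of_pos hc0]
    rw [this]
    calc c * ‖ω₀ z‖ < c * 1 := by
          apply mul_lt_mul_of_pos_left (hωn z hz) hc0
      _ = c := mul_one c
  have hvn1 : ∀ z ∈ unitDisk, ‖v z‖ < 1 := fun z hz => lt_trans (hvn z hz) hc1'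
  refine ⟨fun z => (1/2 : ℂ) * (Complex.log (1 + v z) - Complex.log (1 - v z)),
    ?_, ?_, ?_, ?_⟩
  · intro z hz
    have hva : AnalyticAt ℂ v z := analyticAt_const.mul (hωa z hz)
    have h1 : AnalyticAt ℂ (fun z => Complex.log (1 + v z)) z :=
      (analyticAt_const.add hva).clog (one_add_slit (hvn1 z hz))
    have h2 : AnalyticAt ℂ (fun z => Complex.log (1 - v z)) z := by
      have := (analyticAt_const.add hva.neg).clog
        (by rw [← sub_eq_add_neg]; exact one_add_slit (by rw [norm_neg]; exact hvn1 z hz))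
      simpa [sub_eq_add_neg] using this
    exact analyticAt_const.mul (h1.sub h2)
  · simp [hv, hω0]
  · intro z hz
    have hb := norm_log_sub_log (v z) (hvn1 z hz)
    rw [norm_mul]
    have hvz := hvn z hz
    have hrn : (0:ℝ) ≤ ‖v z‖ := norm_nonneg _
    have m1 : Real.log (1 + ‖v z‖) < Real.log (1 + c) :=
      Real.log_lt_log (by linarith) (by linarith)
    have m2 : Real.log (1 - c) < Real.log (1 - ‖v z‖) :=
      Real.log_lt_log (by linarith) (by linarith)
    have : ‖(1/2 : ℂ)‖ = 1/2 := by norm_num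
    rw [this]
    nlinarith [norm_nonneg (Complex.log (1 + v z) - Complex.log (1 - v z))]
  · intro z hz
    have h1 : (1:ℂ) + v z ≠ 0 := one_add_ne (hvn1 z hz)
    have h2 : (1:ℂ) - v z ≠ 0 := by
      have := one_add_ne (u := -v z) (by rw [norm_neg]; exact hvn1 z hz)
      rwa [← sub_eq_add_neg] at this
    have ht := tanh_artanh (v z) h1 h2
    rw [hωe z hz, Bean, ht]
end

section
/- Let α ∈ [0,1] and k ∈ {−1, 0, 1}, and let β be a nonzero complex number with Re β > 0 satisfying |β| ≥ ( R₀ + 2α + (1−α)√2 ) · 2^{(k+3)/2}, where R₀ = e·√(2/(1+e²)). If p is analytic and nonvanishing on 𝔻 with p(0) = 1 and (1−α)·p(z) + α·p(z)² + β·z·p'(z)/p(z)^k ≺ 𝔅(z), then p(z) ≺ (1+z)^{1/2}, where the square root is the principal branch. -/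
open Complex Metric

/-! ### Auxiliary lemmas -/

lemma cpow_half_mul_self {w : ℂ} (hw : w ≠ 0) : w ^ ((1:ℂ)/2) * w ^ ((1:ℂ)/2) = w := by
  rw [← Complex.cpow_add _ _ hw]; norm_num

lemma re_cpow_half_nonneg (w : ℂ) : 0 ≤ (w ^ ((1:ℂ)/2)).re := by
  rcases eq_or_ne w 0 with h | h
  · simp [h, Complex.zero_cpow (by norm_num : (1:ℂ)/2 ≠ 0)]
  · rw [Complex.cpow_def_of_ne_zero h, Complex.exp_re]
    have him : (Complex.log w * ((1:ℂ)/2)).im = w.arg / 2 := by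
      simp [Complex.mul_im, Complex.log_im, Complex.log_re]
      ring
    rw [him]
    have h1 : -(Real.pi/2) ≤ w.arg / 2 := by
      have := Complex.neg_pi_lt_arg w; linarith
    have h2 : w.arg / 2 ≤ Real.pi/2 := by
      have := Complex.arg_le_pi w; linarith
    exact mul_nonneg (Real.exp_pos _).le (Real.cos_nonneg_of_mem_Icc ⟨h1, h2⟩)

lemma sqrt_sq_of_re_pos {a : ℂ} (ha : 0 < a.re) : (a^2) ^ ((1:ℂ)/2) = a := by
  have ha0 : a ≠ 0 := fun h => by simp [h] at ha
  have ha2 : a^2 ≠ 0 := pow_ne_zero _ ha0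
  set b := (a^2) ^ ((1:ℂ)/2) with hb
  have hbb : b * b = a^2 := cpow_half_mul_self ha2
  have hargne : Complex.arg (a^2) ≠ Real.pi := by
    intro h
    rw [Complex.arg_eq_pi_iff] at h
    obtain ⟨hre, him⟩ := h
    have h1 : (a^2).im = 2 * a.re * a.im := by
      simp [pow_two, Complex.mul_im]; ring
    have h2 : (a^2).re = a.re^2 - a.im^2 := by
      simp [pow_two, Complex.mul_re]
    have haim : a.im = 0 := by
      rw [h1] at him
      rcases mul_eq_zero.1 him with h | h
      · rcases mul_eq_zero.1 h with h | h
        · norm_num at h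
        · linarith
      · exact h
    rw [h2, haim] at hre; nlinarith
  have hrb : 0 < b.re := by
    rw [hb, Complex.cpow_def_of_ne_zero ha2, Complex.exp_re]
    have him : (Complex.log (a^2) * ((1:ℂ)/2)).im = (a^2).arg / 2 := by
      simp [Complex.mul_im, Complex.log_im, Complex.log_re]; ring
    rw [him]
    have h1 : -(Real.pi/2) < (a^2).arg / 2 := by
      have := Complex.neg_pi_lt_arg (a^2); linarith
    have h2 : (a^2).arg / 2 < Real.pi/2 := by
      have := Complex.arg_le_pi (a^2)
      have := lt_of_le_of_ne this hargne
      linarith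
    exact mul_pos (Real.exp_pos _) (Real.cos_pos_of_mem_Ioo ⟨h1, h2⟩)
  have : (b - a) * (b + a) = 0 := by ring_nf; linear_combination hbb
  rcases mul_eq_zero.1 this with h | h
  · exact sub_eq_zero.1 h
  · exfalso
    have hba : b = -a := eq_neg_of_add_eq_zero_left h
    rw [hba] at hrb
    simp only [Complex.neg_re] at hrb
    linarith

lemma cosh_ne_zero_of_norm_lt_one {ζ : ℂ} (h : ‖ζ‖ < 1) : Complex.cosh ζ ≠ 0 := by
  intro h0
  have hcos : Complex.cos (ζ * Complex.I) = 0 := by rw [Complex.cos_mul_I]; exact h0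
  rw [Complex.cos_eq_zero_iff] at hcos
  obtain ⟨n, hn⟩ := hcos
  have hnorm : ‖ζ * Complex.I‖ = ‖ζ‖ := by simp
  rw [hn] at hnorm
  have hcast : (2 * (n:ℂ) + 1) * (Real.pi:ℂ) / 2 = (((2*n+1 : ℤ):ℝ) * Real.pi / 2 : ℝ) := by
    push_cast; ring
  rw [hcast, Complex.norm_real, Real.norm_eq_abs] at hnorm
  have hodd : (1:ℝ) ≤ |((2*n+1 : ℤ):ℝ)| := by
    rw [← Int.cast_abs]
    have : (1:ℤ) ≤ |2*n+1| := Int.one_le_abs (by omega)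
    exact_mod_cast this
  have hpi : (3:ℝ) < Real.pi := Real.pi_gt_three
  have : (3/2 : ℝ) ≤ |((2*n+1:ℤ):ℝ) * Real.pi / 2| := by
    rw [abs_div, abs_mul, _root_.abs_of_nonneg Real.pi_pos.le]
    rw [show |(2:ℝ)| = 2 by norm_num]
    nlinarith [abs_nonneg ((2*n+1:ℤ):ℝ)]
  linarith [hnorm ▸ this]

lemma sinh_decomp (ζ : ℂ) : Complex.sinh ζ =
    (Real.sinh ζ.re * Real.cos ζ.im : ℝ) + (Real.cosh ζ.re * Real.sin ζ.im : ℝ) * Complex.I := by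
  nth_rewrite 1 [← Complex.re_add_im ζ]
  rw [Complex.sinh_add, Complex.cosh_mul_I, Complex.sinh_mul_I]
  push_cast [← Complex.ofReal_sinh, ← Complex.ofReal_cosh, ← Complex.ofReal_cos, ← Complex.ofReal_sin]
  ring

lemma cosh_decomp (ζ : ℂ) : Complex.cosh ζ =
    (Real.cosh ζ.re * Real.cos ζ.im : ℝ) + (Real.sinh ζ.re * Real.sin ζ.im : ℝ) * Complex.I := by
  nth_rewrite 1 [← Complex.re_add_im ζ]
  rw [Complex.cosh_add, Complex.cosh_mul_I, Complex.sinh_mul_I]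
  push_cast [← Complex.ofReal_sinh, ← Complex.ofReal_cosh, ← Complex.ofReal_cos, ← Complex.ofReal_sin]
  ring

lemma norm_tanh_le {ζ : ℂ} (h : ‖ζ‖ < 1) : ‖Complex.tanh ζ‖ ≤ Real.sqrt 3 := by
  have him : |ζ.im| < 1 := lt_of_le_of_lt (Complex.abs_im_le_norm ζ) h
  set x := ζ.re; set y := ζ.im
  have hcos : (1/2 : ℝ) ≤ Real.cos y := by
    have h1 : Real.cos y = Real.cos |y| := (Real.cos_abs y).symm
    have h2 : Real.cos |y| ≥ Real.cos (Real.pi/3) := by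
      apply Real.cos_le_cos_of_nonneg_of_le_pi (abs_nonneg _)
      · linarith [Real.pi_gt_three]
      · linarith [Real.pi_gt_three]
    rw [Real.cos_pi_div_three] at h2
    linarith
  have hsc : Real.sin y ^ 2 + Real.cos y ^ 2 = 1 := Real.sin_sq_add_cos_sq y
  have hkey : Real.sin y ^ 2 ≤ 3 * Real.cos y ^ 2 := by nlinarith
  have hnsq_sinh : Complex.normSq (Complex.sinh ζ) =
      Real.sinh x ^2 * Real.cos y ^2 + Real.cosh x ^2 * Real.sin y ^2 := by
    rw [sinh_decomp ζ]
    simp [Complex.normSq_apply, ← Complex.ofReal_sinh, ← Complex.ofReal_cosh,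
      ← Complex.ofReal_sin, ← Complex.ofReal_cos]
    ring
  have hnsq_cosh : Complex.normSq (Complex.cosh ζ) =
      Real.cosh x ^2 * Real.cos y ^2 + Real.sinh x ^2 * Real.sin y ^2 := by
    rw [cosh_decomp ζ]
    simp [Complex.normSq_apply, ← Complex.ofReal_sinh, ← Complex.ofReal_cosh,
      ← Complex.ofReal_sin, ← Complex.ofReal_cos]
    ring
  have hch : Real.cosh x ^ 2 = 1 + Real.sinh x ^ 2 := by
    have := Real.cosh_sq_sub_sinh_sq x; linarith
  have hratio : Complex.normSq (Complex.sinh ζ) ≤ 3 * Complex.normSq (Complex.cosh ζ) := by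
    rw [hnsq_sinh, hnsq_cosh, hch]
    nlinarith [sq_nonneg (Real.sinh x), sq_nonneg (Real.sin y), sq_nonneg (Real.cos y)]
  have hcne := cosh_ne_zero_of_norm_lt_one h
  have htanh : Complex.tanh ζ = Complex.sinh ζ / Complex.cosh ζ := Complex.tanh_eq_sinh_div_cosh ζ
  rw [htanh]
  have h3 : ‖Complex.sinh ζ / Complex.cosh ζ‖^2 ≤ 3 := by
    rw [norm_div]
    rw [div_pow]
    have hc2 : 0 < ‖Complex.cosh ζ‖^2 := pow_pos (norm_pos_iff.mpr hcne) 2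
    rw [div_le_iff₀ hc2]
    have e1 : ‖Complex.sinh ζ‖^2 = Complex.normSq (Complex.sinh ζ) := by
      rw [Complex.sq_norm]
    have e2 : ‖Complex.cosh ζ‖^2 = Complex.normSq (Complex.cosh ζ) := by
      rw [Complex.sq_norm]
    rw [e1, e2]; exact hratio
  calc ‖Complex.sinh ζ / Complex.cosh ζ‖
      = Real.sqrt (‖Complex.sinh ζ / Complex.cosh ζ‖^2) := (Real.sqrt_sq (norm_nonneg _)).symm
    _ ≤ Real.sqrt 3 := Real.sqrt_le_sqrt h3

lemma one_add_tanh_ne_zero {ζ : ℂ} (h : ‖ζ‖ < 1) : 1 + Complex.tanh ζ ≠ 0 := by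
  have hc := cosh_ne_zero_of_norm_lt_one h
  rw [Complex.tanh_eq_sinh_div_cosh]
  intro h0
  apply Complex.exp_ne_zero ζ
  rw [← Complex.cosh_add_sinh ζ]
  field_simp at h0
  rwa [mul_zero] at h0

lemma norm_bean_sub_one {ζ : ℂ} (h : ‖ζ‖ < 1) : ‖Bean ζ - 1‖ ≤ Real.sqrt 3 := by
  have hne := one_add_tanh_ne_zero h
  set B := Bean ζ with hB
  have hBB : B * B = 1 + Complex.tanh ζ := cpow_half_mul_self hne
  have hre : 0 ≤ B.re := re_cpow_half_nonneg _
  have h1B : (1:ℝ) ≤ ‖B + 1‖ := by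
    have : (1:ℝ) ≤ (B + 1).re := by simp [Complex.add_re]; linarith
    calc (1:ℝ) ≤ (B+1).re := this
    _ ≤ ‖B+1‖ := Complex.re_le_norm _
  have hfac : (B - 1) * (B + 1) = Complex.tanh ζ := by
    have : (B-1)*(B+1) = B*B - 1 := by ring
    rw [this, hBB]; ring
  have : ‖B - 1‖ * ‖B + 1‖ = ‖Complex.tanh ζ‖ := by rw [← norm_mul, hfac]
  nlinarith [norm_tanh_le h, norm_nonneg (B - 1), Real.sqrt_nonneg 3]

lemma numeric_key : 1 + Real.sqrt 3 < Real.exp 1 * Real.sqrt (2/(1+Real.exp 1 ^ 2)) + Real.sqrt 2 := by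
  have he1 : (2.7182818283 : ℝ) < Real.exp 1 := Real.exp_one_gt_d9
  have he2 : Real.exp 1 < 2.7182818286 := Real.exp_one_lt_d9
  have h3 : Real.sqrt 3 ≤ 1.7321 := by
    rw [show (3:ℝ) = 1.7321^2 - 0.00017041 by norm_num]
    calc Real.sqrt (1.7321^2 - 0.00017041) ≤ Real.sqrt (1.7321^2) := by
          apply Real.sqrt_le_sqrt; norm_num
      _ = 1.7321 := Real.sqrt_sq (by norm_num)
  have h2 : (1.41421:ℝ) ≤ Real.sqrt 2 := by
    have : (1.41421:ℝ) = Real.sqrt (1.41421^2) := (Real.sqrt_sq (by norm_num)).symm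
    rw [this]
    apply Real.sqrt_le_sqrt; norm_num
  have hden : (1 + Real.exp 1 ^ 2) < 8.38906 := by nlinarith
  have hdpos : (0:ℝ) < 1 + Real.exp 1 ^ 2 := by positivity
  have hfrac : (0.23833930 : ℝ) ≤ 2/(1+Real.exp 1 ^2) := by
    rw [le_div_iff₀ hdpos]; nlinarith
  have hs : (0.4882 : ℝ) ≤ Real.sqrt (2/(1+Real.exp 1 ^2)) := by
    have : (0.4882:ℝ) = Real.sqrt (0.4882^2) := (Real.sqrt_sq (by norm_num)).symm
    rw [this]
    apply Real.sqrt_le_sqrt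
    calc (0.4882:ℝ)^2 = 0.23833924 := by norm_num
      _ ≤ 0.23833930 := by norm_num
      _ ≤ _ := hfrac
  have : (1.327:ℝ) ≤ Real.exp 1 * Real.sqrt (2/(1+Real.exp 1 ^2)) := by
    nlinarith [Real.sqrt_nonneg (2/(1+Real.exp 1^2))]
  linarith

lemma lemniscate_facts {a : ℂ} (hre : 0 ≤ a.re) (h : ‖a^2 - 1‖ ≤ 1) :
    ‖a‖ ≤ Real.sqrt 2 ∧ ‖a - 1‖ ≤ 1 := by
  set x := a.re; set y := a.im
  have hns : Complex.normSq (a^2 - 1) ≤ 1 := by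
    have : Complex.normSq (a^2-1) = ‖a^2-1‖^2 := by
      rw [Complex.sq_norm]
    rw [this]; nlinarith [norm_nonneg (a^2-1)]
  have hexp : Complex.normSq (a^2 - 1) = (x^2 - y^2 - 1)^2 + (2*x*y)^2 := by
    simp [Complex.normSq_apply, pow_two, Complex.mul_re, Complex.mul_im]
    ring
  have hkey : (x^2+y^2)^2 ≤ 2*(x^2 - y^2) := by nlinarith
  have hna : ‖a‖^2 = x^2 + y^2 := by
    rw [Complex.sq_norm, Complex.normSq_apply]; ring
  have hx : x ≤ ‖a‖ := Complex.re_le_norm a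
  have hsq2 : Real.sqrt 2 ^ 2 = 2 := Real.sq_sqrt (by norm_num)
  have hs2 : (1:ℝ) ≤ Real.sqrt 2 := by nlinarith [Real.sqrt_nonneg 2]
  have hs2' : Real.sqrt 2 ≤ 2 := by nlinarith [Real.sqrt_nonneg 2]
  have htn : (0:ℝ) ≤ x^2+y^2 := by positivity
  have h2x : (x^2+y^2)^2 ≤ (Real.sqrt 2 * x)^2 := by
    rw [mul_pow, hsq2]; nlinarith [sq_nonneg y]
  have ht : x^2+y^2 ≤ Real.sqrt 2 * x := by
    calc x^2+y^2 = Real.sqrt ((x^2+y^2)^2) := (Real.sqrt_sq htn).symm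
      _ ≤ Real.sqrt ((Real.sqrt 2 * x)^2) := Real.sqrt_le_sqrt h2x
      _ = Real.sqrt 2 * x := Real.sqrt_sq (mul_nonneg (Real.sqrt_nonneg 2) hre)
  constructor
  · have h1 : ‖a‖^2 ≤ Real.sqrt 2 * ‖a‖ := by
      calc ‖a‖^2 = x^2+y^2 := hna
        _ ≤ Real.sqrt 2 * x := ht
        _ ≤ Real.sqrt 2 * ‖a‖ := mul_le_mul_of_nonneg_left hx (Real.sqrt_nonneg 2)
    nlinarith [norm_nonneg a, hs2]
  · have hna1 : ‖a-1‖^2 = (x-1)^2 + y^2 := by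
      rw [Complex.sq_norm, Complex.normSq_apply]
      simp [Complex.sub_re, Complex.sub_im]
      ring
    nlinarith [norm_nonneg (a-1), mul_nonneg hre (sub_nonneg.mpr hs2')]

lemma re_pos_on_preconnected {p : ℂ → ℂ} {V : Set ℂ} (hV : IsPreconnected V)
    (hc : ContinuousOn p V) (hne : ∀ z ∈ V, p z ≠ 0) (hb : ∀ z ∈ V, ‖(p z)^2 - 1‖ ≤ 1)
    (h0 : (0:ℂ) ∈ V) (hp0 : p 0 = 1) : ∀ z ∈ V, 0 < (p z).re := by
  have hnever : ∀ z ∈ V, (p z).re ≠ 0 := by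
    intro z hz hre0
    have hpz := hne z hz
    have him : (p z).im ≠ 0 := by
      intro h
      apply hpz
      exact Complex.ext hre0 h
    have hre2 : ((p z)^2 - 1).re = -((p z).im^2) - 1 := by
      simp [pow_two, Complex.mul_re, hre0]
    have habs := Complex.abs_re_le_norm ((p z)^2 - 1)
    rw [hre2] at habs
    have h1 : |-((p z).im^2) - 1| = (p z).im^2 + 1 := by
      rw [abs_of_nonpos (by nlinarith [sq_nonneg (p z).im])]; ring
    rw [h1] at habs
    have := hb z hz
    nlinarith [sq_nonneg (p z).im, pow_pos (abs_pos.mpr him) 2, _root_.sq_abs (p z).im]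
  intro z hz
  by_contra hle
  push_neg at hle
  have hlt : (p z).re < 0 := lt_of_le_of_ne hle (hnever z hz)
  have hcont : ContinuousOn (fun z => (p z).re) V := Complex.continuous_re.comp_continuousOn hc
  have hIcc : (0:ℝ) ∈ Set.Icc ((p z).re) ((p 0).re) := by
    rw [hp0]; exact ⟨hle, by norm_num⟩
  obtain ⟨z₁, hz₁, hval⟩ := hV.intermediate_value hz h0 hcont hIcc
  exact hnever z₁ hz₁ hval

/-- first-order differential subordination implying p ≺ √(1+z),
with k ∈ {−1,0,1}. -/
theorem diffSubordSqrt (α : ℝ) (hα0 : 0 ≤ α) (hα1 : α ≤ 1)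
    (k : ℤ) (hk : k = -1 ∨ k = 0 ∨ k = 1)
    (β : ℂ) (hβne : β ≠ 0) (hβre : 0 < β.re)
    (hβ : (Real.exp 1 * Real.sqrt (2 / (1 + Real.exp 1 ^ 2)) + 2 * α
        + (1 - α) * Real.sqrt 2) * (2:ℝ) ^ (((k:ℝ) + 3) / 2) ≤ ‖β‖)
    (p : ℂ → ℂ) (hp : AnalyticOnNhd ℂ p unitDisk)
    (hpne : ∀ z ∈ unitDisk, p z ≠ 0) (hp0 : p 0 = 1)
    (hsub : Subord
      (fun z => (1 - (α:ℂ)) * p z + (α:ℂ) * (p z)^2 + β * z * deriv p z / (p z) ^ k)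
      Bean) :
    Subord p (fun z => (1 + z) ^ ((1:ℂ)/2)) := by
  obtain ⟨ω₀, hω₀a, hω₀0, hω₀lt, heq⟩ := hsub
  set R₀ : ℝ := Real.exp 1 * Real.sqrt (2/(1+Real.exp 1 ^ 2)) with hR₀
  set c : ℝ := (1 + Real.sqrt 3)/(R₀ + Real.sqrt 2) with hc
  have hR₀pos : 0 < R₀ := by
    rw [hR₀]
    have h1 : (0:ℝ) < 2/(1+Real.exp 1 ^2) := by positivity
    positivity
  have hden : (0:ℝ) < R₀ + Real.sqrt 2 := by positivity
  have hc1 : c < 1 := by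
    rw [hc, div_lt_one hden]
    have := numeric_key
    rw [← hR₀] at this
    linarith
  have hc0 : 0 ≤ c := by
    rw [hc]
    have : (0:ℝ) ≤ 1 + Real.sqrt 3 := by positivity
    positivity
  set w : ℂ → ℂ := fun z => p z^2 - 1 with hw
  have hwa : AnalyticOnNhd ℂ w unitDisk := (hp.pow 2).sub analyticOnNhd_const
  have hw0 : w 0 = 0 := by simp [hw, hp0]
  have hwcont : ContinuousOn w unitDisk := hwa.continuousOn
  have hudisk : IsOpen unitDisk := isOpen_ball
  -- derivative of w
  have hderiv : ∀ x ∈ unitDisk, deriv w x = 2 * p x * deriv p x := by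
    intro x hx
    have hd := (hp x hx).differentiableAt
    have h1 : HasDerivAt (fun z => p z ^ 2) (2 * p x * deriv p x) x := by
      have h2 := hd.hasDerivAt.pow 2
      norm_num at h2
      exact h2
    have h3 : HasDerivAt w (2 * p x * deriv p x) x := h1.sub_const 1
    exact h3.deriv
  -- the core pointwise bound on ‖x * deriv w x‖
  have hzb : ∀ ρ : ℝ, 0 < ρ → ρ < 1 → (∀ z : ℂ, ‖z‖ ≤ ρ → ‖w z‖ ≤ 1) →
      ∀ x : ℂ, ‖x‖ ≤ ρ → ‖x * deriv w x‖ ≤ c := by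
    intro ρ hρ0 hρ1 hw1 x hxρ
    have hsub1 : Metric.closedBall (0:ℂ) ρ ⊆ unitDisk := by
      intro z hz
      rw [Metric.mem_closedBall, dist_zero_right] at hz
      rw [unitDisk, Metric.mem_ball, dist_zero_right]
      linarith
    have hrepos : ∀ z ∈ Metric.closedBall (0:ℂ) ρ, 0 < (p z).re := by
      apply re_pos_on_preconnected (convex_closedBall (0:ℂ) ρ).isPreconnected
      · exact hp.continuousOn.mono hsub1
      · exact fun z hz => hpne z (hsub1 hz)
      · intro z hz
        rw [Metric.mem_closedBall, dist_zero_right] at hz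
        exact hw1 z hz
      · exact Metric.mem_closedBall_self hρ0.le
      · exact hp0
    have hxmem : x ∈ Metric.closedBall (0:ℂ) ρ := by
      rw [Metric.mem_closedBall, dist_zero_right]; exact hxρ
    have hx1 : x ∈ unitDisk := hsub1 hxmem
    have hpx : p x ≠ 0 := hpne x hx1
    have hrex : 0 < (p x).re := hrepos x hxmem
    obtain ⟨hpnorm, hp1norm⟩ := lemniscate_facts hrex.le (hw1 x hxρ)
    have heqx := heq x hx1
    simp only at heqx
    set B : ℂ := Bean (ω₀ x) with hB
    set S : ℂ := (1 - (α:ℂ)) * p x + (α:ℂ) * (p x)^2 with hS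
    have hpk : (p x)^k ≠ 0 := zpow_ne_zero _ hpx
    have h1 : β * x * deriv p x / (p x)^k = B - S := by
      rw [← heqx, hS]; ring
    have hzp : β * x * deriv p x = (B - S) * (p x)^k := (div_eq_iff hpk).mp h1
    have hzp1 : p x ^ (k+1) = p x ^ k * p x := zpow_add_one₀ hpx k
    have hweq : β * (x * deriv w x) = 2 * (B - S) * (p x)^(k+1) := by
      rw [hderiv x hx1, hzp1]
      calc β * (x * (2 * p x * deriv p x)) = 2 * (β * x * deriv p x) * p x := by ring
        _ = 2 * ((B - S) * p x ^ k) * p x := by rw [hzp]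
        _ = 2 * (B - S) * (p x ^ k * p x) := by ring
    have hnorm : ‖β‖ * ‖x * deriv w x‖ = 2 * ‖B - S‖ * ‖p x‖^(k+1) := by
      rw [← norm_mul, hweq]
      rw [norm_mul, norm_mul, norm_zpow]
      norm_num
    -- bound ‖B - S‖
    have hBS : ‖B - S‖ ≤ Real.sqrt 3 + 1 := by
      have hsplit : B - S = (B - 1) + ((1:ℂ) - S) := by ring
      have h1S : (1:ℂ) - S = (1 - (α:ℂ)) * (1 - p x) + (α:ℂ) * (1 - (p x)^2) := by
        rw [hS]; ring
      have hB1 : ‖B - 1‖ ≤ Real.sqrt 3 := norm_bean_sub_one (hω₀lt x hx1)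
      have hα : ‖(1 - (α:ℂ))‖ = 1 - α := by
        rw [show (1 - (α:ℂ)) = ((1-α : ℝ) : ℂ) by push_cast; ring]
        rw [Complex.norm_real, Real.norm_eq_abs, _root_.abs_of_nonneg (by linarith)]
      have hαn : ‖(α:ℂ)‖ = α := by
        rw [Complex.norm_real, Real.norm_eq_abs, _root_.abs_of_nonneg hα0]
      have hn1 : ‖(1:ℂ) - p x‖ ≤ 1 := by rw [norm_sub_rev]; exact hp1norm
      have hn2 : ‖(1:ℂ) - (p x)^2‖ ≤ 1 := by
        rw [norm_sub_rev]; exact hw1 x hxρ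
      have h1Sn : ‖(1:ℂ) - S‖ ≤ 1 := by
        rw [h1S]
        calc ‖(1 - (α:ℂ)) * (1 - p x) + (α:ℂ) * (1 - (p x)^2)‖
            ≤ ‖(1 - (α:ℂ)) * (1 - p x)‖ + ‖(α:ℂ) * (1 - (p x)^2)‖ := norm_add_le _ _
          _ = (1-α) * ‖(1:ℂ) - p x‖ + α * ‖(1:ℂ) - (p x)^2‖ := by
              rw [norm_mul, norm_mul, hα, hαn]
          _ ≤ (1-α) * 1 + α * 1 := by
              apply add_le_add
              · exact mul_le_mul_of_nonneg_left hn1 (by linarith)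
              · exact mul_le_mul_of_nonneg_left hn2 hα0
          _ = 1 := by ring
      calc ‖B - S‖ = ‖(B - 1) + ((1:ℂ) - S)‖ := by rw [← hsplit]
        _ ≤ ‖B - 1‖ + ‖(1:ℂ) - S‖ := norm_add_le _ _
        _ ≤ Real.sqrt 3 + 1 := add_le_add hB1 h1Sn
    -- bound ‖p x‖^(k+1)
    have hppow : ‖p x‖^(k+1) ≤ (2:ℝ)^(((k:ℝ)+1)/2) := by
      rcases hk with rfl | rfl | rfl
      · rw [show ((((-1:ℤ):ℝ))+1)/2 = 0 by push_cast; ring, Real.rpow_zero]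
        norm_num
      · rw [show ((((0:ℤ):ℝ))+1)/2 = 1/2 by push_cast; ring, ← Real.sqrt_eq_rpow]
        simpa using hpnorm
      · rw [show ((((1:ℤ):ℝ))+1)/2 = (1:ℝ) by push_cast; ring, Real.rpow_one]
        have h2 : ‖p x‖ ^ ((1:ℤ)+1) = ‖p x‖ * ‖p x‖ := by
          rw [show ((1:ℤ)+1) = 2 by norm_num, zpow_two]
        rw [h2]
        nlinarith [norm_nonneg (p x), Real.sq_sqrt (show (0:ℝ) ≤ 2 by norm_num),
          Real.sqrt_nonneg 2]
    -- bound from hβ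
    have hpow_pos : (0:ℝ) < (2:ℝ)^(((k:ℝ)+1)/2) := Real.rpow_pos_of_pos (by norm_num) _
    have h23 : (2:ℝ)^(((k:ℝ)+3)/2) = (2:ℝ)^(((k:ℝ)+1)/2) * 2 := by
      rw [show ((k:ℝ)+3)/2 = ((k:ℝ)+1)/2 + 1 by ring, Real.rpow_add (by norm_num), Real.rpow_one]
    have hs2 : Real.sqrt 2 ≤ 2 := by
      nlinarith [Real.sq_sqrt (show (0:ℝ) ≤ 2 by norm_num), Real.sqrt_nonneg 2]
    have hcoef : R₀ + Real.sqrt 2 ≤ R₀ + 2*α + (1-α) * Real.sqrt 2 := by nlinarith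
    have hβ2 : (R₀ + Real.sqrt 2) * ((2:ℝ)^(((k:ℝ)+1)/2) * 2) ≤ ‖β‖ := by
      calc (R₀ + Real.sqrt 2) * ((2:ℝ)^(((k:ℝ)+1)/2) * 2)
          ≤ (R₀ + 2*α + (1-α) * Real.sqrt 2) * ((2:ℝ)^(((k:ℝ)+1)/2) * 2) := by
            apply mul_le_mul_of_nonneg_right hcoef
            positivity
        _ = (R₀ + 2*α + (1-α) * Real.sqrt 2) * (2:ℝ)^(((k:ℝ)+3)/2) := by rw [h23]
        _ ≤ ‖β‖ := hβ
    have hβpos : (0:ℝ) < ‖β‖ := norm_pos_iff.mpr hβne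
    have hppow_nonneg : (0:ℝ) ≤ ‖p x‖^(k+1) := zpow_nonneg (norm_nonneg _) _
    have hmain : ‖β‖ * ‖x * deriv w x‖ ≤ (1 + Real.sqrt 3) * ((2:ℝ)^(((k:ℝ)+1)/2) * 2) := by
      rw [hnorm]
      have h1 : 2 * ‖B - S‖ * ‖p x‖^(k+1) ≤ 2 * (Real.sqrt 3 + 1) * (2:ℝ)^(((k:ℝ)+1)/2) := by
        apply mul_le_mul
        · exact mul_le_mul_of_nonneg_left hBS (by norm_num)
        · exact hppow
        · exact hppow_nonneg
        · positivity
      calc 2 * ‖B - S‖ * ‖p x‖^(k+1) ≤ 2 * (Real.sqrt 3 + 1) * (2:ℝ)^(((k:ℝ)+1)/2) := h1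
        _ = (1 + Real.sqrt 3) * ((2:ℝ)^(((k:ℝ)+1)/2) * 2) := by ring
    have hfinal : ‖β‖ * ‖x * deriv w x‖ ≤ ‖β‖ * c := by
      have hcmul : c * (R₀ + Real.sqrt 2) = 1 + Real.sqrt 3 := by
        rw [hc]; field_simp
      calc ‖β‖ * ‖x * deriv w x‖ ≤ (1 + Real.sqrt 3) * ((2:ℝ)^(((k:ℝ)+1)/2) * 2) := hmain
        _ = c * ((R₀ + Real.sqrt 2) * ((2:ℝ)^(((k:ℝ)+1)/2) * 2)) := by rw [← hcmul]; ring
        _ ≤ c * ‖β‖ := mul_le_mul_of_nonneg_left hβ2 hc0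
        _ = ‖β‖ * c := by ring
    exact le_of_mul_le_mul_left hfinal hβpos
  -- improvement step : if ‖w‖ ≤ 1 on the closed ball of radius ρ, then ‖w‖ ≤ c on the open ball
  have hkey : ∀ ρ : ℝ, 0 < ρ → ρ < 1 → (∀ z : ℂ, ‖z‖ ≤ ρ → ‖w z‖ ≤ 1) →
      ∀ z : ℂ, ‖z‖ < ρ → ‖w z‖ ≤ c := by
    intro ρ hρ0 hρ1 hw1 z hz
    have hsub1 : Metric.closedBall (0:ℂ) ρ ⊆ unitDisk := by
      intro y hy
      rw [Metric.mem_closedBall, dist_zero_right] at hy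
      rw [unitDisk, Metric.mem_ball, dist_zero_right]
      linarith
    have hwd : AnalyticOnNhd ℂ (deriv w) unitDisk := hwa.deriv
    have hdc : DiffContOnCl ℂ (deriv w) (Metric.ball (0:ℂ) ρ) := by
      constructor
      · apply (hwd.differentiableOn).mono
        exact fun y hy => hsub1 (Metric.ball_subset_closedBall hy)
      · rw [closure_ball (0:ℂ) hρ0.ne']
        exact hwd.continuousOn.mono hsub1
    have hballd : ∀ y ∈ Metric.closedBall (0:ℂ) ρ, ‖deriv w y‖ ≤ c/ρ := by
      intro y hy
      apply Complex.norm_le_of_forall_mem_frontier_norm_le isBounded_ball hdc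
      · intro v hv
        rw [frontier_ball (0:ℂ) hρ0.ne'] at hv
        rw [mem_sphere_iff_norm, sub_zero] at hv
        have hvb := hzb ρ hρ0 hρ1 hw1 v (le_of_eq hv)
        rw [norm_mul, hv] at hvb
        rw [le_div_iff₀ hρ0]
        linarith
      · rw [closure_ball (0:ℂ) hρ0.ne']
        exact hy
    have hlip : ‖w z - w 0‖ ≤ c/ρ * ‖z - 0‖ := by
      apply (convex_ball (0:ℂ) ρ).norm_image_sub_le_of_norm_deriv_le
      · intro y hy
        exact (hwa y (hsub1 (Metric.ball_subset_closedBall hy))).differentiableAt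
      · intro y hy
        exact hballd y (Metric.ball_subset_closedBall hy)
      · exact Metric.mem_ball_self hρ0
      · rw [Metric.mem_ball, dist_zero_right]; exact hz
    rw [hw0, sub_zero, sub_zero] at hlip
    calc ‖w z‖ ≤ c/ρ * ‖z‖ := hlip
      _ ≤ c/ρ * ρ := by
          apply mul_le_mul_of_nonneg_left hz.le
          positivity
      _ = c := by field_simp
  -- the continuation argument
  have hmain : ∀ z ∈ unitDisk, ‖w z‖ ≤ c := by
    set S : Set ℝ := {r : ℝ | r < 1 ∧ ∀ z : ℂ, ‖z‖ ≤ r → ‖w z‖ ≤ 1} with hSdef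
    have h0S : (0:ℝ) ∈ S := by
      constructor
      · norm_num
      · intro z hz
        have : z = 0 := by
          rwa [← norm_le_zero_iff]
        rw [this, hw0]; norm_num
    have hbdd : BddAbove S := ⟨1, fun r hr => hr.1.le⟩
    set ρ : ℝ := sSup S with hρdef
    have hρ1 : ρ ≤ 1 := csSup_le ⟨0, h0S⟩ (fun r hr => hr.1.le)
    have hρpos : 0 < ρ := by
      have hwc : ContinuousAt w 0 := (hwa 0 (by simp [unitDisk])).continuousAt
      rw [Metric.continuousAt_iff] at hwc
      obtain ⟨δ, hδ0, hδ⟩ := hwc 1 one_pos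
      have hin : min (δ/2) (1/2) ∈ S := by
        constructor
        · have : min (δ/2) (1/2) ≤ 1/2 := min_le_right _ _
          linarith
        · intro z hz
          have h1 : dist z 0 < δ := by
            rw [dist_zero_right]
            calc ‖z‖ ≤ min (δ/2) (1/2) := hz
              _ ≤ δ/2 := min_le_left _ _
              _ < δ := by linarith
          have := hδ h1
          rw [hw0, dist_zero_right] at this
          exact this.le
      calc (0:ℝ) < min (δ/2) (1/2) := by positivity
        _ ≤ ρ := le_csSup hbdd hin
    have hin1 : ∀ z : ℂ, ‖z‖ < ρ → ‖w z‖ ≤ 1 := by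
      intro z hz
      obtain ⟨r, hrS, hrz⟩ := exists_lt_of_lt_csSup ⟨0, h0S⟩ hz
      exact hrS.2 z hrz.le
    have hinc : ∀ z : ℂ, ‖z‖ < ρ → ‖w z‖ ≤ c := by
      intro z hz
      obtain ⟨r, hzr, hrρ⟩ := exists_between hz
      have hr1 : r < 1 := lt_of_lt_of_le hrρ hρ1
      have hr0 : 0 < r := lt_of_le_of_lt (norm_nonneg z) hzr
      exact hkey r hr0 hr1 (fun y hy => hin1 y (lt_of_le_of_lt hy hrρ)) z hzr
    by_cases hρlt : ρ < 1
    · exfalso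
      -- boundary: ‖w z‖ ≤ c for ‖z‖ = ρ as well
      have hsb : ∀ z : ℂ, ‖z‖ ≤ ρ → ‖w z‖ ≤ c := by
        intro z hz
        rcases lt_or_eq_of_le hz with h | h
        · exact hinc z h
        · -- ‖z‖ = ρ
          have hzu : z ∈ unitDisk := by
            rw [unitDisk, Metric.mem_ball, dist_zero_right, ← h] at *
            linarith
          have hwc : ContinuousAt w z := (hwa z hzu).continuousAt
          have hinner : Continuous (fun t : ℝ => (t:ℂ) * z) :=
            Complex.continuous_ofReal.mul continuous_const
          have hcomp : ContinuousAt (fun t : ℝ => ‖w ((t:ℂ) * z)‖) 1 := by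
            have h1 : ContinuousAt (fun t : ℝ => w ((t:ℂ) * z)) 1 := by
              apply ContinuousAt.comp (g := w) (f := fun t : ℝ => (t:ℂ) * z) ?_
                hinner.continuousAt
              simpa using hwc
            exact h1.norm
          have htend : Filter.Tendsto (fun t : ℝ => ‖w ((t:ℂ) * z)‖) (nhdsWithin 1 (Set.Iio 1))
              (nhds ‖w z‖) := by
            have : (fun t : ℝ => ‖w ((t:ℂ) * z)‖) 1 = ‖w z‖ := by norm_num
            rw [← this]
            exact hcomp.continuousWithinAt.tendsto
          apply le_of_tendsto htend
          have hev : ∀ᶠ t : ℝ in nhdsWithin 1 (Set.Iio 1), 0 < t := by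
            apply Filter.Eventually.filter_mono nhdsWithin_le_nhds
            exact eventually_gt_nhds one_pos
          filter_upwards [hev, self_mem_nhdsWithin] with t ht0 ht1
          apply hinc
          have hnn : ‖(t:ℂ) * z‖ = t * ‖z‖ := by
            rw [norm_mul, Complex.norm_real, Real.norm_eq_abs, _root_.abs_of_pos ht0]
          rw [hnn, h]
          have ht1' : t < 1 := ht1
          nlinarith [hρpos]
      -- thickening
      set U : Set ℂ := unitDisk ∩ (w ⁻¹' (Metric.ball (0:ℂ) 1)) with hUdef
      have hUopen : IsOpen U := hwcont.isOpen_inter_preimage hudisk isOpen_ball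
      have hKU : Metric.closedBall (0:ℂ) ρ ⊆ U := by
        intro z hz
        rw [Metric.mem_closedBall, dist_zero_right] at hz
        constructor
        · rw [unitDisk, Metric.mem_ball, dist_zero_right]
          linarith
        · rw [Set.mem_preimage, Metric.mem_ball, dist_zero_right]
          exact lt_of_le_of_lt (hsb z hz) hc1
      obtain ⟨δ, hδ0, hδsub⟩ := (isCompact_closedBall (0:ℂ) ρ).exists_cthickening_subset_open
        hUopen hKU
      have hthick : Metric.closedBall (0:ℂ) (δ + ρ) ⊆ U := by
        rw [← cthickening_closedBall hδ0.le hρpos.le (0:ℂ)]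
        exact hδsub
      set r' : ℝ := min (δ + ρ) ((ρ + 1)/2) with hr'def
      have hr'S : r' ∈ S := by
        constructor
        · calc r' ≤ (ρ+1)/2 := min_le_right _ _
            _ < 1 := by linarith
        · intro z hz
          have hzmem : z ∈ Metric.closedBall (0:ℂ) (δ + ρ) := by
            rw [Metric.mem_closedBall, dist_zero_right]
            calc ‖z‖ ≤ r' := hz
              _ ≤ δ + ρ := min_le_left _ _
          have := hthick hzmem
          rw [hUdef, Set.mem_inter_iff, Set.mem_preimage, Metric.mem_ball, dist_zero_right] at this
          exact this.2.le
      have : r' ≤ ρ := le_csSup hbdd hr'S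
      have hr'gt : ρ < r' := by
        rw [hr'def]
        apply lt_min
        · linarith
        · linarith
      linarith
    · -- ρ = 1
      push_neg at hρlt
      intro z hz
      rw [unitDisk, Metric.mem_ball, dist_zero_right] at hz
      exact hinc z (lt_of_lt_of_le hz hρlt)
  -- positivity of Re p on the whole disk
  have hre : ∀ z ∈ unitDisk, 0 < (p z).re := by
    apply re_pos_on_preconnected (convex_ball (0:ℂ) 1).isPreconnected
    · exact hp.continuousOn
    · exact hpne
    · intro z hz
      exact le_trans (hmain z hz) hc1.le
    · simp [unitDisk]
    · exact hp0
  -- assemble the subordination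
  refine ⟨w, hwa, hw0, fun z hz => lt_of_le_of_lt (hmain z hz) hc1, fun z hz => ?_⟩
  show p z = (1 + w z) ^ ((1:ℂ)/2)
  have h1 : (1:ℂ) + w z = (p z)^2 := by rw [hw]; ring
  rw [h1, sqrt_sq_of_re_pos (hre z hz)]
end

section
/- Let A, B be real numbers with −1 ≤ B < 0 < A ≤ 1 and set R₁ = min{ 1, (√2·e − √(1+e²)) / (A·√(1+e²) − √2·e·B) }. If p is analytic on 𝔻 and p ≺ (1+Az)/(1+Bz), then for every z ∈ 𝔻 with |z| < R₁ one has p(z) ∈ 𝔅(𝔻), i.e. there exists u ∈ 𝔻 with p(z) = 𝔅(u). (This is the 𝒮*_𝔅-radius statement for the Janowski class 𝒮*[A,B], the case p(z) = zf'(z)/f(z).) -/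
open Complex Metric

noncomputable def bconst : ℝ := Real.sqrt 2 * Real.exp 1 / Real.sqrt (1 + Real.exp 1 ^ 2)
lemma expsq_pos : (0:ℝ) < 1 + Real.exp 1 ^ 2 := by positivity
lemma sqrtS_pos : 0 < Real.sqrt (1 + Real.exp 1 ^ 2) := Real.sqrt_pos.mpr expsq_pos
lemma bconst_pos : 0 < bconst := by unfold bconst; positivity
lemma bconst_sq : bconst ^ 2 = 2 * Real.exp 1 ^ 2 / (1 + Real.exp 1 ^ 2) := by
  unfold bconst
  rw [div_pow, mul_pow, Real.sq_sqrt (by norm_num : (0:ℝ) ≤ 2), Real.sq_sqrt expsq_pos.le]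
lemma one_lt_exp_one : (1:ℝ) < Real.exp 1 := by
  have := Real.add_one_le_exp (1:ℝ); linarith
lemma one_lt_bconst : 1 < bconst := by
  have h1 := one_lt_exp_one
  have h2 : 1 < bconst ^ 2 := by
    rw [bconst_sq, lt_div_iff₀ expsq_pos]; nlinarith
  nlinarith [bconst_pos]
lemma bconst_lt_two : bconst < 2 := by
  have h2 : bconst ^ 2 < 2 := by
    rw [bconst_sq, div_lt_iff₀ expsq_pos]; nlinarith [Real.exp_pos 1]
  nlinarith [bconst_pos]


lemma half_div_half (x y : ℂ) : (x / 2) / (y / 2) = x / y := by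
  rcases eq_or_ne y 0 with rfl | hy
  · simp
  · field_simp

lemma ratio_shift (E : ℂ) (hE : E ≠ 0) (h : E ^ 2 + 1 ≠ 0) :
    (E - E⁻¹) / (E + E⁻¹) = (E ^ 2 - 1) / (E ^ 2 + 1) := by
  have h3 : E + E⁻¹ = (E ^ 2 + 1) / E := by field_simp
  have h4 : E - E⁻¹ = (E ^ 2 - 1) / E := by field_simp
  rw [h3, h4, div_div_div_cancel_right₀]
  exact hE

lemma ratio_id (s : ℂ) (h1 : (1 : ℂ) - s ≠ 0) :
    ((1 + s) / (1 - s) - 1) / ((1 + s) / (1 - s) + 1) = s := by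
  have e1 : (1 + s) / (1 - s) - 1 = (2 * s) / (1 - s) := by
    rw [div_sub_one h1]; congr 1; ring
  have e2 : (1 + s) / (1 - s) + 1 = 2 / (1 - s) := by
    rw [div_add_one h1]; congr 1; ring
  rw [e1, e2, div_div_div_cancel_right₀]
  · ring
  · exact h1

lemma plus_one_ne (s : ℂ) (h1 : (1 : ℂ) - s ≠ 0) :
    (1 + s) / (1 - s) + 1 ≠ 0 := by
  have e2 : (1 + s) / (1 - s) + 1 = 2 / (1 - s) := by
    rw [div_add_one h1]; congr 1; ring
  rw [e2]
  exact div_ne_zero two_ne_zero h1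

lemma bean_disk (w : ℂ) (hw : ‖w - 1‖ < bconst - 1) : ∃ u ∈ unitDisk, Bean u = w := by
  have hb1 := one_lt_bconst
  have hb2 := bconst_lt_two
  have hE1 := one_lt_exp_one
  set s : ℂ := w ^ 2 - 1 with hs
  set r : ℝ := ‖s‖ with hrdef
  have hr0 : 0 ≤ r := norm_nonneg _
  have hrb : r < bconst ^ 2 - 1 := by
    have h1 : s = (w - 1) * (w + 1) := by rw [hs]; ring
    have h2 : ‖w + 1‖ ≤ ‖w - 1‖ + 2 := by
      calc ‖w + 1‖ = ‖(w - 1) + 2‖ := by ring_nf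
        _ ≤ ‖w - 1‖ + ‖(2:ℂ)‖ := norm_add_le _ _
        _ = ‖w - 1‖ + 2 := by norm_num
    have h3 : r ≤ ‖w - 1‖ * (‖w - 1‖ + 2) := by
      rw [hrdef, h1, norm_mul]
      exact mul_le_mul_of_nonneg_left h2 (norm_nonneg _)
    nlinarith [norm_nonneg (w - 1)]
  have hr1 : r < 1 := by
    have : bconst ^ 2 < 2 := by
      rw [bconst_sq, div_lt_iff₀ expsq_pos]; nlinarith [Real.exp_pos 1]
    linarith
  have hw0 : 0 < w.re := by
    have h1 : |(w - 1).re| ≤ ‖w - 1‖ := by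
      simpa using Complex.abs_re_le_norm (w - 1)
    have h2 : (w - 1).re = w.re - 1 := by simp
    rw [h2] at h1
    have := abs_le.mp h1
    linarith [this.1]
  have hwne : w ≠ 0 := by
    intro h; rw [h] at hw0; simp at hw0
  have h1ps : (1 : ℂ) + s ≠ 0 := by
    intro h
    have : s = -1 := by linear_combination h
    rw [this] at hrdef; simp at hrdef; rw [hrdef] at hr1; linarith
  have h1ms : (1 : ℂ) - s ≠ 0 := by
    intro h
    have : s = 1 := by linear_combination -h
    rw [this] at hrdef; simp at hrdef; rw [hrdef] at hr1; linarith
  set u : ℂ := (Complex.log (1 + s) - Complex.log (1 - s)) / 2 with hu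
  have hsnorm : ‖s‖ < 1 := hr1
  have hsum1 : HasSum (fun n : ℕ => s ^ n / n) (-Complex.log (1 - s)) :=
    Complex.hasSum_taylorSeries_neg_log hsnorm
  have hsum2 : HasSum (fun n : ℕ => (-s) ^ n / n) (-Complex.log (1 + s)) := by
    have := Complex.hasSum_taylorSeries_neg_log (z := -s) (by simpa using hsnorm)
    simpa [sub_neg_eq_add] using this
  have hsumu : HasSum (fun n : ℕ => (s ^ n / n - (-s) ^ n / n) / 2) u := by
    have h := (hsum1.sub hsum2).div_const 2
    have : (-Complex.log (1 - s) - -Complex.log (1 + s)) / 2 = u := by rw [hu]; ring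
    rwa [this] at h
  have hrnorm : ‖(r : ℂ)‖ < 1 := by
    rw [Complex.norm_real, Real.norm_eq_abs, _root_.abs_of_nonneg hr0]; exact hr1
  have hsumr1 : HasSum (fun n : ℕ => (r : ℂ) ^ n / n) (-Complex.log (1 - r)) :=
    Complex.hasSum_taylorSeries_neg_log hrnorm
  have hsumr2 : HasSum (fun n : ℕ => (-(r:ℂ)) ^ n / n) (-Complex.log (1 + r)) := by
    have := Complex.hasSum_taylorSeries_neg_log (z := -(r:ℂ)) (by simpa using hrnorm)
    simpa [sub_neg_eq_add] using this
  set M : ℝ := (Real.log (1 + r) - Real.log (1 - r)) / 2 with hM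
  have hsumG : HasSum (fun n : ℕ => (r ^ n / n - (-r) ^ n / n) / 2) M := by
    have h := (hsumr1.sub hsumr2).div_const 2
    have h2 := Complex.hasSum_re h
    convert h2 using 1
    · funext n
      have e : ((r:ℂ) ^ n / (n:ℂ) - (-(r:ℂ)) ^ n / (n:ℂ)) / 2
          = (((r ^ n / (n:ℝ) - (-r) ^ n / (n:ℝ)) / 2 : ℝ) : ℂ) := by push_cast; ring
      rw [e, Complex.ofReal_re]
    · rw [hM]
      have e1 : (1 : ℂ) - (r:ℂ) = ((1 - r : ℝ) : ℂ) := by push_cast; ring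
      have e2 : (1 : ℂ) + (r:ℂ) = ((1 + r : ℝ) : ℂ) := by push_cast; ring
      rw [e1, e2, ← Complex.ofReal_log (by linarith : (0:ℝ) ≤ 1 - r),
        ← Complex.ofReal_log (by linarith : (0:ℝ) ≤ 1 + r)]
      have e3 : (-((Real.log (1 - r) : ℝ) : ℂ) - -((Real.log (1 + r) : ℝ) : ℂ)) / 2
          = (((Real.log (1 + r) - Real.log (1 - r)) / 2 : ℝ) : ℂ) := by push_cast; ring
      rw [e3, Complex.ofReal_re]
  have hterm : ∀ n : ℕ, ‖(s ^ n / n - (-s) ^ n / n) / 2‖ ≤ (r ^ n / n - (-r) ^ n / n) / 2 := by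
    intro n
    rcases Nat.even_or_odd n with he | ho
    · rw [he.neg_pow, he.neg_pow]
      simp
    · rw [ho.neg_pow, ho.neg_pow]
      have e1 : (s ^ n / n - -s ^ n / n) / 2 = s ^ n / n := by ring
      have e2 : (r ^ n / n - -r ^ n / n) / 2 = r ^ n / n := by ring
      rw [e1, e2, norm_div, norm_pow]
      simp [hrdef]
  have hnormsum : Summable fun n : ℕ => ‖(s ^ n / n - (-s) ^ n / n) / 2‖ :=
    Summable.of_nonneg_of_le (fun n => norm_nonneg _) hterm hsumG.summable
  have hu_le : ‖u‖ ≤ M := by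
    have b1 : ‖∑' (n : ℕ), (s ^ n / (n:ℂ) - (-s) ^ n / (n:ℂ)) / 2‖
        ≤ ∑' (n : ℕ), ‖(s ^ n / (n:ℂ) - (-s) ^ n / (n:ℂ)) / 2‖ :=
      norm_tsum_le_tsum_norm hnormsum
    have b2 : ∑' (n : ℕ), ‖(s ^ n / (n:ℂ) - (-s) ^ n / (n:ℂ)) / 2‖
        ≤ ∑' (n : ℕ), (r ^ n / (n:ℝ) - (-r) ^ n / (n:ℝ)) / 2 :=
      Summable.tsum_le_tsum hterm hnormsum hsumG.summable
    have b3 := hsumG.tsum_eq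
    have b4 := hsumu.tsum_eq
    rw [b4] at b1
    linarith
  have hM1 : M < 1 := by
    have hfac : (bconst ^ 2 - 1) * (1 + Real.exp 1 ^ 2) = Real.exp 1 ^ 2 - 1 := by
      rw [bconst_sq]; field_simp; ring
    have hr' : r * (1 + Real.exp 1 ^ 2) < Real.exp 1 ^ 2 - 1 := by
      calc r * (1 + Real.exp 1 ^ 2) < (bconst ^ 2 - 1) * (1 + Real.exp 1 ^ 2) :=
            mul_lt_mul_of_pos_right hrb expsq_pos
        _ = Real.exp 1 ^ 2 - 1 := hfac
    have key : (1 + r) / (1 - r) < Real.exp 1 ^ 2 := by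
      rw [div_lt_iff₀ (by linarith : (0:ℝ) < 1 - r)]
      nlinarith
    have hlog := Real.log_lt_log (by apply div_pos <;> linarith) key
    rw [Real.log_div (by linarith) (by linarith), Real.log_pow, Real.log_exp] at hlog
    rw [hM]; push_cast at hlog; linarith
  have humem : u ∈ unitDisk := by
    rw [unitDisk, mem_ball_zero_iff]
    exact lt_of_le_of_lt hu_le hM1
  -- Now show Bean u = w
  have hexp_ne : Complex.exp u ≠ 0 := Complex.exp_ne_zero u
  have hE2 : Complex.exp u ^ 2 = (1 + s) / (1 - s) := by
    rw [sq, ← Complex.exp_add]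
    have : u + u = Complex.log (1 + s) - Complex.log (1 - s) := by rw [hu]; ring
    rw [this, Complex.exp_sub, Complex.exp_log h1ps, Complex.exp_log h1ms]
  have hden : Complex.exp u ^ 2 + 1 ≠ 0 := by
    rw [hE2]
    exact plus_one_ne s h1ms
  have htanh : Complex.tanh u = s := by
    have hsh : Complex.sinh u = (Complex.exp u - (Complex.exp u)⁻¹) / 2 := by
      rw [show Complex.sinh u = (Complex.exp u - Complex.exp (-u)) / 2 from rfl, Complex.exp_neg]
    have hch : Complex.cosh u = (Complex.exp u + (Complex.exp u)⁻¹) / 2 := by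
      rw [show Complex.cosh u = (Complex.exp u + Complex.exp (-u)) / 2 from rfl, Complex.exp_neg]
    rw [Complex.tanh_eq_sinh_div_cosh, hsh, hch, half_div_half,
      ratio_shift _ hexp_ne hden, hE2]
    exact ratio_id s h1ms
  have hBean : Bean u = (w ^ 2) ^ ((1:ℂ)/2) := by
    rw [Bean, htanh]
    congr 1
    rw [hs]; ring
  set y : ℂ := (w ^ 2) ^ ((1:ℂ)/2) with hy
  have hw2 : w ^ 2 ≠ 0 := pow_ne_zero _ hwne
  have hy2 : y ^ 2 = w ^ 2 := by
    have h := Complex.cpow_nat_inv_pow (w ^ 2) (two_ne_zero)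
    have e : ((2:ℕ):ℂ)⁻¹ = (1:ℂ)/2 := by norm_num
    rw [e] at h
    exact h
  have hyre : 0 ≤ y.re := by
    rw [hy, Complex.cpow_def_of_ne_zero hw2, Complex.exp_re]
    apply mul_nonneg (Real.exp_pos _).le
    apply Real.cos_nonneg_of_mem_Icc
    have him : (Complex.log (w ^ 2) * ((1:ℂ)/2)).im = (w ^ 2).arg / 2 := by
      simp [Complex.mul_im, Complex.log_im]
      ring
    rw [him]
    constructor
    · linarith [Complex.neg_pi_lt_arg (w ^ 2)]
    · linarith [Complex.arg_le_pi (w ^ 2)]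
  have hcases : y = w ∨ y = -w := by
    have h0 : (y - w) * (y + w) = 0 := by linear_combination hy2
    rcases mul_eq_zero.mp h0 with h | h
    · left; linear_combination h
    · right; linear_combination h
  have hyw : y = w := by
    rcases hcases with h | h
    · exact h
    · exfalso
      rw [h] at hyre
      simp at hyre
      linarith
  exact ⟨u, humem, by rw [hBean, hyw]⟩

/-- 𝒮*_𝔅-radius for the Janowski class 𝒮*[A,B], −1 ≤ B < 0 < A ≤ 1. -/
theorem beanRadiusJanowski (A B : ℝ) (hB1 : -1 ≤ B) (hB0 : B < 0)
    (hA0 : 0 < A) (hA1 : A ≤ 1) (R1 : ℝ)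
    (hR1 : R1 = min 1 ((Real.sqrt 2 * Real.exp 1 - Real.sqrt (1 + Real.exp 1 ^ 2)) /
        (A * Real.sqrt (1 + Real.exp 1 ^ 2) - Real.sqrt 2 * Real.exp 1 * B)))
    (p : ℂ → ℂ) (hp : AnalyticOnNhd ℂ p unitDisk)
    (hsub : Subord p (fun z => (1 + (A:ℂ)*z) / (1 + (B:ℂ)*z))) :
    ∀ z ∈ unitDisk, ‖z‖ < R1 → ∃ u ∈ unitDisk, p z = Bean u := by

  intro z hz hzR
  obtain ⟨ω, hωa, hω0, hωlt, hωeq⟩ := hsub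
  have hb1 := one_lt_bconst
  have hS := sqrtS_pos
  -- Schwarz lemma
  have hsch : ‖ω z‖ ≤ ‖z‖ := by
    have h := Complex.norm_le_norm_of_mapsTo_ball (R := 1) (f := ω)
      (fun x hx => ((hωa x hx).differentiableAt).differentiableWithinAt)
      (fun x hx => by
        rw [mem_closedBall_zero_iff]
        exact (hωlt x hx).le)
      hω0
      (by simpa [unitDisk, mem_ball_zero_iff] using hz)
    simpa using h
  set t : ℝ := ‖ω z‖ with ht
  have ht0 : 0 ≤ t := norm_nonneg _
  have hz1 : ‖z‖ < 1 := by simpa [unitDisk, mem_ball_zero_iff] using hz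
  have ht1 : t < 1 := lt_of_le_of_lt hsch hz1
  have htR : t < R1 := lt_of_le_of_lt hsch hzR
  -- the key real bound : t * (A - bconst * B) < bconst - 1
  have hdenpos : 0 < A - bconst * B := by nlinarith [bconst_pos]
  have hfrac : (Real.sqrt 2 * Real.exp 1 - Real.sqrt (1 + Real.exp 1 ^ 2)) /
      (A * Real.sqrt (1 + Real.exp 1 ^ 2) - Real.sqrt 2 * Real.exp 1 * B)
      = (bconst - 1) / (A - bconst * B) := by
    have hb : bconst * Real.sqrt (1 + Real.exp 1 ^ 2) = Real.sqrt 2 * Real.exp 1 := by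
      rw [bconst]; field_simp
    have hd2 : A * Real.sqrt (1 + Real.exp 1 ^ 2) - Real.sqrt 2 * Real.exp 1 * B
        = (A - bconst * B) * Real.sqrt (1 + Real.exp 1 ^ 2) := by
      linear_combination B * hb
    have hn2 : Real.sqrt 2 * Real.exp 1 - Real.sqrt (1 + Real.exp 1 ^ 2)
        = (bconst - 1) * Real.sqrt (1 + Real.exp 1 ^ 2) := by
      linear_combination -hb
    rw [hn2, hd2, mul_div_mul_right _ _ hS.ne']
  have htAB : t * (A - bconst * B) < bconst - 1 := by
    have hR1le : R1 ≤ (bconst - 1) / (A - bconst * B) := by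
      rw [hR1, hfrac]; exact min_le_right _ _
    have := lt_of_lt_of_le htR hR1le
    exact (lt_div_iff₀ hdenpos).mp this
  -- the denominator 1 + B ω z
  set D : ℂ := 1 + (B:ℂ) * ω z with hD
  have hBt : ‖(B:ℂ) * ω z‖ = -B * t := by
    rw [norm_mul, Complex.norm_real, Real.norm_eq_abs, abs_of_neg hB0]
  have hDlb : 1 + B * t ≤ ‖D‖ := by
    have h := norm_sub_norm_le (1 : ℂ) (-((B:ℂ) * ω z))
    have e1 : (1:ℂ) - -((B:ℂ) * ω z) = D := by rw [hD]; ring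
    rw [e1, norm_neg, hBt] at h
    simp only [norm_one] at h
    linarith
  have hDpos : 0 < 1 + B * t := by nlinarith
  have hDne : D ≠ 0 := by
    intro h
    rw [h, norm_zero] at hDlb
    linarith
  -- p z - 1
  have hpz : p z = (1 + (A:ℂ) * ω z) / D := by
    rw [hωeq z hz]
  have hpz1 : p z - 1 = (((A:ℝ) - B : ℝ) : ℂ) * ω z / D := by
    rw [hpz, div_sub_one hDne, hD]
    push_cast
    ring
  have hnorm1 : ‖p z - 1‖ = (A - B) * t / ‖D‖ := by
    rw [hpz1, norm_div, norm_mul, Complex.norm_real, Real.norm_eq_abs,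
      _root_.abs_of_pos (by linarith : (0:ℝ) < A - B)]
  have hfinal : ‖p z - 1‖ < bconst - 1 := by
    rw [hnorm1]
    have step1 : (A - B) * t / ‖D‖ ≤ (A - B) * t / (1 + B * t) :=
      div_le_div_of_nonneg_left (by nlinarith) hDpos hDlb
    have step2 : (A - B) * t / (1 + B * t) < bconst - 1 := by
      rw [div_lt_iff₀ hDpos]
      nlinarith
    linarith
  obtain ⟨u, hu1, hu2⟩ := bean_disk (p z) hfinal
  exact ⟨u, hu1, hu2.symm⟩
end

section
/- Let α ∈ [0,1) and set r_α = (√2·e − √(1+e²)) / ( (1−2α)·√(1+e²) + √2·e ). If p is analytic on 𝔻 and p ≺ (1+(1−2α)z)/(1−z), then for every z ∈ 𝔻 with |z| < r_α one has p(z) ∈ 𝔅(𝔻), i.e. there exists u ∈ 𝔻 with p(z) = 𝔅(u). In particular, for α = 0 the 𝒮*_𝔅-radius of the class of starlike functions is (√2·e − √(1+e²))/(√2·e + √(1+e²)) ≈ 0.1406. -/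
set_option maxHeartbeats 1000000


open Complex Metric

lemma norm_logdiff_le {s : ℂ} {t : ℝ} (hs : ‖s‖ ≤ t) (ht : t < 1) :
    ‖Complex.log (1+s) - Complex.log (1-s)‖ ≤ Real.log (1+t) - Real.log (1-t) := by
  have ht0 : 0 ≤ t := le_trans (norm_nonneg s) hs
  have hs1 : ‖s‖ < 1 := lt_of_le_of_lt hs ht
  have h1 : HasSum (fun n : ℕ ↦ s^n/n) (-Complex.log (1-s)) :=
    Complex.hasSum_taylorSeries_neg_log hs1
  have h2 : HasSum (fun n : ℕ ↦ (-s)^n/n) (-Complex.log (1+s)) := by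
    have := Complex.hasSum_taylorSeries_neg_log (z := -s) (by simpa using hs1)
    simpa [sub_neg_eq_add] using this
  have hC : HasSum (fun n : ℕ ↦ s^n/n - (-s)^n/n)
      (Complex.log (1+s) - Complex.log (1-s)) := by
    have := h1.sub h2
    rwa [neg_sub_neg] at this
  -- real side
  have htabs : |t| < 1 := by rwa [_root_.abs_of_nonneg ht0]
  have hr1 : HasSum (fun n : ℕ ↦ t^(n+1)/(n+1)) (-Real.log (1-t)) :=
    Real.hasSum_pow_div_log_of_abs_lt_one htabs
  have hr2 : HasSum (fun n : ℕ ↦ (-t)^(n+1)/(n+1)) (-Real.log (1+t)) := by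
    have := Real.hasSum_pow_div_log_of_abs_lt_one (x := -t) (by rwa [abs_neg])
    simpa [sub_neg_eq_add] using this
  have hrsub : HasSum (fun n : ℕ ↦ t^(n+1)/(n+1) - (-t)^(n+1)/(n+1))
      (Real.log (1+t) - Real.log (1-t)) := by
    have := hr1.sub hr2
    rwa [neg_sub_neg] at this
  set G : ℕ → ℝ := fun n ↦ t^n/n - (-t)^n/n with hGdef
  have hG : HasSum G (Real.log (1+t) - Real.log (1-t)) := by
    refine (hasSum_nat_add_iff' (f := G) 1).1 ?_
    have e : (Real.log (1+t) - Real.log (1-t)) - ∑ i ∈ Finset.range 1, G i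
        = Real.log (1+t) - Real.log (1-t) := by simp [hGdef]
    rw [e]
    convert hrsub using 2 with n
    · rfl
    · simp only [G]
      push_cast
      ring
  have hterm : ∀ n : ℕ, ‖s^n/n - (-s)^n/n‖ ≤ G n := by
    intro n
    rcases n.even_or_odd with he | ho
    · simp [hGdef, he.neg_pow]
    · have e1 : s^n/n - (-s)^n/n = 2*(s^n/(n:ℂ)) := by rw [ho.neg_pow]; ring
      have e2 : G n = 2*(t^n/n) := by rw [hGdef]; simp only [ho.neg_pow]; ring
      rw [e1, e2]
      rcases Nat.eq_zero_or_pos n with rfl | hn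
      · simpa using ho
      have hnc : (0:ℝ) < n := by exact_mod_cast hn
      calc ‖(2:ℂ)*(s^n/(n:ℂ))‖ = 2*(‖s‖^n/(n:ℝ)) := by
            simp [norm_mul, norm_div, norm_pow]
        _ ≤ 2*(t^n/(n:ℝ)) := by
            have : ‖s‖^n ≤ t^n := pow_le_pow_left₀ (norm_nonneg s) hs n
            gcongr
  have hsumnorm : Summable (fun n : ℕ ↦ ‖s^n/(n:ℂ) - (-s)^n/(n:ℂ)‖) :=
    Summable.of_nonneg_of_le (fun n ↦ norm_nonneg _) hterm hG.summable
  calc ‖Complex.log (1+s) - Complex.log (1-s)‖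
      = ‖∑' n : ℕ, (s^n/(n:ℂ) - (-s)^n/n)‖ := by rw [hC.tsum_eq]
    _ ≤ ∑' n : ℕ, ‖s^n/(n:ℂ) - (-s)^n/n‖ := norm_tsum_le_tsum_norm hsumnorm
    _ ≤ ∑' n : ℕ, G n := Summable.tsum_le_tsum hterm hsumnorm hG.summable
    _ = _ := hG.tsum_eq

/-- 𝒮*_𝔅-radius for starlike functions of order α. -/
theorem beanRadiusStarlikeOrder (α : ℝ) (hα0 : 0 ≤ α) (hα1 : α < 1) (rα : ℝ)
    (hrα : rα = (Real.sqrt 2 * Real.exp 1 - Real.sqrt (1 + Real.exp 1 ^ 2)) /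
        ((1 - 2*α) * Real.sqrt (1 + Real.exp 1 ^ 2) + Real.sqrt 2 * Real.exp 1))
    (p : ℂ → ℂ) (hp : AnalyticOnNhd ℂ p unitDisk)
    (hsub : Subord p (fun z => (1 + (1 - 2*(α:ℂ))*z) / (1 - z))) :
    ∀ z ∈ unitDisk, ‖z‖ < rα → ∃ u ∈ unitDisk, p z = Bean u := by
  intro z hz hzr
  obtain ⟨ω, hωa, hω0, hω1, hpeq⟩ := hsub
  set E := Real.exp 1 with hE
  clear_value E
  have hE1 : 1 < E := by
    have := Real.exp_one_gt_d9; rw [hE]; linarith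
  set S := Real.sqrt (1 + E^2) with hS
  clear_value S
  set Q := Real.sqrt 2 * E with hQ
  clear_value Q
  have hS0 : 0 < S := by rw [hS]; positivity
  have hS2 : S^2 = 1 + E^2 := by rw [hS]; exact Real.sq_sqrt (by positivity)
  have hQ0 : 0 < Q := by
    have : (0:ℝ) < Real.sqrt 2 := Real.sqrt_pos.2 (by norm_num)
    rw [hQ]; nlinarith
  have hQ2 : Q^2 = 2*E^2 := by
    rw [hQ, mul_pow, Real.sq_sqrt (by norm_num : (0:ℝ) ≤ 2)]
  have hSQ : S < Q := by clear * - hS0 hS2 hQ0 hQ2 hE1; nlinarith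
  set β := 1 - 2*α with hβ
  clear_value β
  have hβ1 : β ≤ 1 := by rw [hβ]; linarith
  have hβm : -1 < β := by rw [hβ]; linarith
  have hD : 0 < β*S + Q := by clear * - hβm hS0 hQ0 hSQ; nlinarith
  have hr_eq : rα = (Q - S)/(β*S + Q) := hrα
  have hr1 : rα < 1 := by
    rw [hr_eq, div_lt_one hD]; clear * - hβm hS0 hQ0 hSQ hD; nlinarith
  set ρ := ‖z‖ with hρdef
  clear_value ρ
  have hρ0 : 0 ≤ ρ := by rw [hρdef]; exact norm_nonneg z
  have hρ1 : ρ < 1 := lt_trans hzr hr1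
  have hρD : ρ*(β*S+Q) < Q - S := by
    rw [hr_eq] at hzr
    exact (lt_div_iff₀ hD).1 hzr
  -- Schwarz lemma
  have hw : ‖ω z‖ ≤ ρ := by
    have hd : DifferentiableOn ℂ ω (Metric.ball 0 1) :=
      fun x hx => ((hωa x hx).differentiableAt).differentiableWithinAt
    have hmp : Set.MapsTo ω (Metric.ball (0:ℂ) 1) (Metric.ball (0:ℂ) 1) :=
      fun x hx => mem_ball_zero_iff.2 (hω1 x hx)
    have habs : ‖z‖ < 1 := by
      simpa using mem_ball_zero_iff.1 hz
    rw [hρdef]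
    simpa using
      Complex.norm_le_norm_of_mapsTo_ball hd (hmp.mono_right ball_subset_closedBall) hω0 habs
  set w := ω z with hwdef
  clear_value w
  have hw1 : ‖w‖ < 1 := lt_of_le_of_lt hw hρ1
  have hwne : (1:ℂ) - w ≠ 0 := by
    intro h
    have hw1' : w = 1 := by linear_combination -h
    rw [hw1'] at hw1; simp at hw1
  have hβc : ((β:ℝ):ℂ) = 1 - 2*(α:ℂ) := by rw [hβ]; push_cast; ring
  have hv : p z = (1 + (β:ℂ)*w)/(1-w) := by
    have hb := hpeq z hz
    simp only at hb
    rw [hb, hβc, hwdef]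
  set c := (1+β*ρ^2)/(1-ρ^2) with hc
  clear_value c
  set R := (1+β)*ρ/(1-ρ^2) with hR
  clear_value R
  have h1ρ : 0 < 1 - ρ := by linarith
  have h1ρ' : 0 < 1 + ρ := by linarith
  have h1ρ2 : 0 < 1 - ρ^2 := by clear * - hρ0 hρ1; nlinarith
  have hnsq : ∀ x : ℂ, ‖x‖^2 = x.re^2 + x.im^2 := by
    intro x
    rw [Complex.sq_norm, Complex.normSq_apply]; ring
  have hkey : ‖w - ((ρ^2:ℝ):ℂ)‖ ≤ ρ * ‖1 - w‖ := by
    have hw2 : w.re^2 + w.im^2 ≤ ρ^2 := by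
      have h1 : ‖w‖^2 ≤ ρ^2 := by clear * - hw hρ0; nlinarith [norm_nonneg w]
      rwa [hnsq] at h1
    have h2 : ‖w - ((ρ^2:ℝ):ℂ)‖^2 ≤ (ρ * ‖1 - w‖)^2 := by
      rw [mul_pow, hnsq, hnsq]
      simp only [Complex.sub_re, Complex.sub_im, Complex.ofReal_re, Complex.ofReal_im,
        Complex.one_re, Complex.one_im]
      clear * - hw2 h1ρ2 hρ0 hρ1; nlinarith [hw2, h1ρ2, sq_nonneg w.im]
    have h3 := Real.sqrt_le_sqrt h2
    rwa [Real.sqrt_sq_eq_abs, Real.sqrt_sq_eq_abs, _root_.abs_of_nonneg (norm_nonneg _),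
      _root_.abs_of_nonneg (mul_nonneg hρ0 (norm_nonneg _))] at h3
  have hvc : ‖p z - ((c:ℝ):ℂ)‖ ≤ R := by
    have hid : p z - ((c:ℝ):ℂ) = (((1+β)/(1-ρ^2) : ℝ) : ℂ) * ((w - ((ρ^2:ℝ):ℂ))/(1-w)) := by
      have hρ2c : ((1:ℂ) - (ρ:ℂ)^2) ≠ 0 := by
        intro h
        have : ((1 - ρ^2 : ℝ):ℂ) = 0 := by push_cast; linear_combination h
        rw [Complex.ofReal_eq_zero] at this
        linarith
      rw [hv, hc]
      push_cast
      field_simp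
      ring
    have hq : ‖(w - ((ρ^2:ℝ):ℂ))/(1-w)‖ ≤ ρ := by
      rw [norm_div, div_le_iff₀ (norm_pos_iff.2 hwne)]
      exact hkey
    have h1β : (0:ℝ) ≤ (1+β)/(1-ρ^2) := div_nonneg (by linarith) h1ρ2.le
    calc ‖p z - ((c:ℝ):ℂ)‖ = |(1+β)/(1-ρ^2)| * ‖(w - ((ρ^2:ℝ):ℂ))/(1-w)‖ := by
          rw [hid, norm_mul, Complex.norm_real, Real.norm_eq_abs]
      _ ≤ ((1+β)/(1-ρ^2)) * ρ := by
          rw [_root_.abs_of_nonneg h1β]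
          exact mul_le_mul_of_nonneg_left hq h1β
      _ = R := by rw [hR]; ring
  have hcR1 : (1:ℝ) ≤ c := by
    rw [hc, le_div_iff₀ h1ρ2]; clear * - h1ρ2 hβm hρ0; nlinarith
  have hR0 : 0 ≤ R := by
    rw [hR]; exact div_nonneg (mul_nonneg (by linarith) hρ0) h1ρ2.le
  have hcRpos : 0 < c - R := by
    have e : c - R = (1-β*ρ)/(1+ρ) := by rw [hc, hR]; field_simp; ring
    rw [e]
    apply div_pos _ h1ρ'
    clear * - hβ1 hρ0 hρ1; nlinarith [mul_le_mul_of_nonneg_right hβ1 hρ0]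
  have hRe : 0 < (p z).re := by
    have h1 : |(p z - ((c:ℝ):ℂ)).re| ≤ ‖p z - ((c:ℝ):ℂ)‖ := Complex.abs_re_le_norm _
    have h2 : (p z - ((c:ℝ):ℂ)).re = (p z).re - c := by
      simp [Complex.sub_re, Complex.ofReal_re]
    rw [h2] at h1
    have h3 := abs_le.1 h1
    clear * - h3 hvc hcRpos
    linarith [h3.1, hvc]
  set m := (1+β*ρ)/(1-ρ) with hm
  clear_value m
  have hcRm : c + R = m := by rw [hc, hR, hm]; field_simp; ring
  have hm1 : 1 ≤ m := by
    rw [← hcRm]; linarith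
  have hmB : m * S < Q := by
    rw [hm, div_mul_eq_mul_div, div_lt_iff₀ h1ρ]
    clear * - hρD h1ρ hS0 hQ0; nlinarith [hρD]
  set t := m^2 - 1 with ht
  clear_value t
  have ht0 : 0 ≤ t := by clear * - ht hm1; nlinarith
  have hmsq : (m*S)^2 < Q^2 := by
    clear * - hmB hm1 hS0; nlinarith [mul_pos (show (0:ℝ) < m by linarith) hS0]
  have htB : t*(1+E^2) < E^2-1 := by clear * - hmsq hS2 hQ2 ht; nlinarith [hmsq]
  have ht1 : t < 1 := by clear * - htB hE1; nlinarith
  set s := (p z)^2 - 1 with hs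
  clear_value s
  have hsb : ‖s‖ ≤ t := by
    have e1 : s = (p z - ((c:ℝ):ℂ))*(p z + ((c:ℝ):ℂ)) + ((c^2 - 1 : ℝ):ℂ) := by
      rw [hs]; push_cast; ring
    have e2 : ‖p z + ((c:ℝ):ℂ)‖ ≤ R + 2*c := by
      have e3 : p z + ((c:ℝ):ℂ) = (p z - ((c:ℝ):ℂ)) + ((2*c : ℝ):ℂ) := by push_cast; ring
      rw [e3]
      refine le_trans (norm_add_le _ _) ?_
      rw [Complex.norm_real, Real.norm_eq_abs, _root_.abs_of_nonneg (by clear * - hcR1; linarith : (0:ℝ) ≤ 2*c)]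
      clear * - hvc
      linarith [hvc]
    calc ‖s‖ ≤ ‖(p z - ((c:ℝ):ℂ))*(p z + ((c:ℝ):ℂ))‖ + ‖((c^2-1:ℝ):ℂ)‖ := by
          rw [e1]; exact norm_add_le _ _
      _ ≤ R*(R+2*c) + (c^2-1) := by
          rw [norm_mul, Complex.norm_real, Real.norm_eq_abs,
            _root_.abs_of_nonneg (by clear * - hcR1; nlinarith : (0:ℝ) ≤ c^2-1)]
          have hmm := mul_le_mul hvc e2 (norm_nonneg _) hR0
          clear * - hmm
          linarith
      _ = (c+R)^2 - 1 := by ring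
      _ = t := by rw [hcRm, ht]
  have hs1' : ‖s‖ < 1 := lt_of_le_of_lt hsb ht1
  have h1s : (1:ℂ) + s ≠ 0 := by
    intro h
    have e : s = -1 := by linear_combination h
    rw [e] at hs1'; norm_num at hs1'
  have h1s' : (1:ℂ) - s ≠ 0 := by
    intro h
    have e : s = 1 := by linear_combination -h
    rw [e] at hs1'; norm_num at hs1'
  set u := (Complex.log (1+s) - Complex.log (1-s))/2 with hu
  clear_value u
  have h1t : 0 < 1 - t := by clear * - ht1; linarith
  have h1t' : 0 < 1 + t := by clear * - ht0; linarith
  have hu1 : ‖u‖ < 1 := by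
    have hb := norm_logdiff_le hsb ht1
    have hlog : Real.log (1+t) - Real.log (1-t) < 2 := by
      rw [← Real.log_div h1t'.ne' h1t.ne']
      have h2 : (1+t)/(1-t) < E^2 := by
        rw [div_lt_iff₀ h1t]; clear * - htB hE1 h1t ht0; nlinarith [htB]
      have h3 : Real.log ((1+t)/(1-t)) < Real.log (E^2) :=
        Real.log_lt_log (by positivity) h2
      have h4 : Real.log (E^2) = 2 := by
        rw [hE, Real.log_pow, Real.log_exp]; norm_num
      clear * - h3 h4
      linarith
    have hub : ‖u‖ ≤ (Real.log (1+t) - Real.log (1-t))/2 := by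
      rw [hu, norm_div]
      have h2 : ‖(2:ℂ)‖ = 2 := by norm_num
      rw [h2]
      clear * - hb; linarith [hb]
    clear * - hub hlog
    linarith
  have hX2 : Complex.exp u ^ 2 = (1+s)/(1-s) := by
    have e : Complex.exp u ^ (2:ℕ) = Complex.exp (Complex.log (1+s) - Complex.log (1-s)) := by
      rw [← Complex.exp_nat_mul]
      congr 1
      rw [hu]; push_cast; ring
    rw [e, Complex.exp_sub, Complex.exp_log h1s, Complex.exp_log h1s']
  have hXX : Complex.exp u ^ 2 + 1 ≠ 0 := by
    rw [hX2]
    intro h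
    field_simp at h
    have h2 : (2:ℂ) = 0 := by linear_combination h
    norm_num at h2
  have hps : (1:ℂ)+s = (p z)^2 := by rw [hs]; ring
  have htanh : 1 + Complex.tanh u = (p z)^2 := by
    have hXne := Complex.exp_ne_zero u
    have hch : Complex.cosh u ≠ 0 := by
      intro h
      apply hXX
      simp only [Complex.cosh, Complex.exp_neg] at h
      field_simp at h
      linear_combination h
    have e1 : 1 + Complex.tanh u = Complex.exp u / Complex.cosh u := by
      rw [Complex.tanh_eq_sinh_div_cosh]
      have hcs := Complex.cosh_add_sinh u
      field_simp
      exact hcs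
    rw [e1, ← hps]
    simp only [Complex.cosh, Complex.exp_neg]
    have hX2' : Complex.exp u^2 * (1-s) = 1+s := by
      rw [hX2]; field_simp
    have hXX2 : Complex.exp u * Complex.exp u + 1 ≠ 0 := by
      intro hh; apply hXX; linear_combination hh
    field_simp [hXX2]
    linear_combination hX2'
  refine ⟨u, ?_, ?_⟩
  · show u ∈ Metric.ball (0:ℂ) 1
    exact mem_ball_zero_iff.2 hu1
  · show p z = (1 + Complex.tanh u) ^ ((1:ℂ)/2)
    rw [htanh, one_div]
    exact (Complex.sq_cpow_two_inv hRe).symm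
end

section
/- Set r_e = 1 + log(√(2/(1+e²))) = 1 − (1/2)·log((1+e²)/2) ≈ 0.28311. If p is analytic on 𝔻 and p ≺ exp (i.e. p is subordinate to z ↦ e^z), then for every z ∈ 𝔻 with |z| < r_e one has p(z) ∈ 𝔅(𝔻), i.e. there exists u ∈ 𝔻 with p(z) = 𝔅(u). (This is the 𝒮*_𝔅-radius statement for the class 𝒮*_e, the case p(z) = zf'(z)/f(z).) -/
open Complex Metric

lemma myNormExpSubOne (z : ℂ) : ‖Complex.exp z - 1‖ ≤ Real.exp ‖z‖ - 1 := by
  have hC : HasSum (fun n : ℕ => z ^ n / (n.factorial)) (Complex.exp z) := by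
    rw [Complex.exp_eq_exp_ℂ]
    exact NormedSpace.expSeries_div_hasSum_exp z
  have hR : HasSum (fun n : ℕ => ‖z‖ ^ n / (n.factorial)) (Real.exp ‖z‖) := by
    rw [Real.exp_eq_exp_ℝ]
    exact NormedSpace.expSeries_div_hasSum_exp ‖z‖
  have hC1 : HasSum (fun n : ℕ => z ^ (n + 1) / ((n+1).factorial)) (Complex.exp z - 1) := by
    have := (hasSum_nat_add_iff' (f := fun n : ℕ => z ^ n / (n.factorial)) 1).mpr hC
    simpa using this
  have hR1 : HasSum (fun n : ℕ => ‖z‖ ^ (n + 1) / ((n+1).factorial)) (Real.exp ‖z‖ - 1) := by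
    have := (hasSum_nat_add_iff' (f := fun n : ℕ => ‖z‖ ^ n / (n.factorial)) 1).mpr hR
    simpa using this
  have hkey : HasSum (fun n : ℕ => ‖z ^ (n + 1) / (((n+1).factorial) : ℂ)‖) (Real.exp ‖z‖ - 1) := by
    convert hR1 using 2 with n
    simp [norm_div, norm_pow]
  calc ‖Complex.exp z - 1‖ = ‖∑' n : ℕ, z ^ (n + 1) / (((n+1).factorial) : ℂ)‖ := by rw [hC1.tsum_eq]
    _ ≤ ∑' n : ℕ, ‖z ^ (n + 1) / (((n+1).factorial) : ℂ)‖ := norm_tsum_le_tsum_norm hkey.summable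
    _ = Real.exp ‖z‖ - 1 := hkey.tsum_eq

lemma myNormLogOneAdd {δ : ℂ} (h : ‖δ‖ < 1) :
    ‖Complex.log (1 + δ)‖ ≤ -Real.log (1 - ‖δ‖) := by
  have hC := Complex.hasSum_taylorSeries_log h
  have hR : HasSum (fun n : ℕ => ‖δ‖ ^ (n + 1) / (n + 1)) (-Real.log (1 - ‖δ‖)) :=
    Real.hasSum_pow_div_log_of_abs_lt_one (by rwa [_root_.abs_of_nonneg (norm_nonneg δ)])
  have hR' : HasSum (fun n : ℕ => ‖δ‖ ^ n / (n : ℝ)) (-Real.log (1 - ‖δ‖)) := by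
    refine (hasSum_nat_add_iff' (f := fun n : ℕ => ‖δ‖ ^ n / (n : ℝ)) 1).mp ?_
    simpa using hR
  have hkey : HasSum (fun n : ℕ => ‖(-1 : ℂ) ^ (n + 1) * δ ^ n / (n : ℂ)‖)
      (-Real.log (1 - ‖δ‖)) := by
    convert hR' using 2 with n
    simp [norm_div, norm_pow]
  calc ‖Complex.log (1 + δ)‖ = ‖∑' n : ℕ, (-1 : ℂ) ^ (n + 1) * δ ^ n / (n : ℂ)‖ := by
        rw [hC.tsum_eq]
    _ ≤ ∑' n : ℕ, ‖(-1 : ℂ) ^ (n + 1) * δ ^ n / (n : ℂ)‖ := norm_tsum_le_tsum_norm hkey.summable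
    _ = -Real.log (1 - ‖δ‖) := hkey.tsum_eq

/-- 𝒮*_𝔅-radius for the class 𝒮*_e. -/
theorem beanRadiusExp (re : ℝ)
    (hre : re = 1 + Real.log (Real.sqrt (2 / (1 + Real.exp 1 ^ 2))))
    (p : ℂ → ℂ) (hp : AnalyticOnNhd ℂ p unitDisk)
    (hsub : Subord p Complex.exp) :
    ∀ z ∈ unitDisk, ‖z‖ < re → ∃ u ∈ unitDisk, p z = Bean u := by
  intro z hz hzre
  obtain ⟨ω, hωa, hω0, hωlt, hωeq⟩ := hsub
  set E := Real.exp 1 with hE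
  have hEpos : (0:ℝ) < 1 + E^2 := by positivity
  have hE2pos : (0:ℝ) < E^2 := by positivity
  have ht : (0:ℝ) < 2 / (1 + E^2) := by positivity
  have hexp2 : Real.exp 2 = E^2 := by
    rw [show (2:ℝ) = 1 + 1 by norm_num, Real.exp_add, hE, sq]
  have hexp2re : Real.exp (2*re) = 2 * E^2 / (1 + E^2) := by
    rw [hre, show 2 * (1 + Real.log (Real.sqrt (2 / (1 + E^2))))
        = 2 + 2 * Real.log (Real.sqrt (2 / (1 + E^2))) by ring,
      Real.log_sqrt ht.le,
      show 2 + 2 * (Real.log (2 / (1 + E^2)) / 2) = 2 + Real.log (2 / (1 + E^2)) by ring,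
      Real.exp_add, Real.exp_log ht, hexp2]
    ring
  have hre1 : re < 1 := by
    have h2 : Real.exp (2*re) < Real.exp 2 := by
      have hE2gt1 : (1:ℝ) < E^2 := by
        rw [← hexp2]; have := Real.add_one_le_exp 2; linarith
      rw [hexp2re, hexp2, div_lt_iff₀ hEpos]; nlinarith
    have := Real.exp_lt_exp.mp h2; linarith
  -- Schwarz lemma
  have hz1 : ‖z‖ < 1 := by
    exact mem_ball_zero_iff.mp hz
  have hsch : ‖ω z‖ ≤ ‖z‖ :=
    Complex.norm_le_norm_of_mapsTo_ball
      (fun x hx => ((hωa x hx).differentiableAt).differentiableWithinAt)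
      (fun x hx => Metric.ball_subset_closedBall (mem_ball_zero_iff.mpr (hωlt x hx))) hω0 hz1
  set w := ω z with hw
  set s := ‖w‖ with hsdef
  have hs0 : (0:ℝ) ≤ s := norm_nonneg w
  have hs : s < re := by
    have : ‖w‖ ≤ ‖z‖ := by exact hsch
    linarith
  have hkey2 : Real.exp (2*s) * (1 + E^2) < 2 * E^2 := by
    have h1 : Real.exp (2*s) < Real.exp (2*re) := Real.exp_lt_exp.mpr (by linarith)
    rw [hexp2re] at h1
    rw [← lt_div_iff₀ hEpos]; exact h1
  have hgap : Real.exp (2*s - 2) + Real.exp (2*s) < 2 := by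
    have h3 : Real.exp (2*s - 2) = Real.exp (2*s) / E^2 := by
      rw [Real.exp_sub, hexp2]
    rw [h3, div_add' _ _ _ (ne_of_gt hE2pos), div_lt_iff₀ hE2pos]
    nlinarith
  have hposA : (0:ℝ) < 2 - Real.exp (2*s) := by
    have := Real.exp_pos (2*s - 2); linarith
  have hd1 : Real.exp (2*s) - 1 < 1 := by linarith
  set δ := 1 - Complex.exp (2*w) with hδ
  have hn2 : ‖(2:ℂ)*w‖ = 2*s := by
    rw [norm_mul, show ‖(2:ℂ)‖ = 2 from by norm_num, ← hsdef]
  have hnormδ : ‖δ‖ ≤ Real.exp (2*s) - 1 := by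
    rw [hδ, norm_sub_rev]
    have := myNormExpSubOne ((2:ℂ)*w)
    rwa [hn2] at this
  have hδlt : ‖δ‖ < 1 := lt_of_le_of_lt hnormδ hd1
  have hAne : (1:ℂ) + δ ≠ 0 := by
    intro h0
    have hδ1 : δ = -1 := by linear_combination h0
    rw [hδ1] at hδlt; simp at hδlt
  have hlogA : ‖Complex.log (1 + δ)‖ ≤ -Real.log (2 - Real.exp (2*s)) := by
    have h1 := myNormLogOneAdd hδlt
    have h2 : Real.log (2 - Real.exp (2*s)) ≤ Real.log (1 - ‖δ‖) :=
      Real.log_le_log hposA (by linarith)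
    linarith
  have hlog_lt : -Real.log (2 - Real.exp (2*s)) < 2 - 2*s := by
    have h4 : Real.exp (2*s - 2) < 2 - Real.exp (2*s) := by linarith
    have h5 := Real.log_lt_log (Real.exp_pos _) h4
    rw [Real.log_exp] at h5; linarith
  set u := w - (1/2 : ℂ) * Complex.log (1 + δ) with hu
  have hunorm : ‖u‖ < 1 := by
    have hle : ‖u‖ ≤ s + (1/2) * ‖Complex.log (1 + δ)‖ := by
      calc ‖u‖ ≤ ‖w‖ + ‖(1/2:ℂ) * Complex.log (1 + δ)‖ := norm_sub_le _ _
        _ = s + (1/2) * ‖Complex.log (1 + δ)‖ := by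
            rw [norm_mul, show ‖(1/2:ℂ)‖ = 1/2 from by norm_num, ← hsdef]
    linarith
  -- the value
  have hexpu : Complex.exp (2*u) = Complex.exp (2*w) / (1 + δ) := by
    rw [show (2:ℂ)*u = 2*w - Complex.log (1 + δ) by rw [hu]; ring,
      Complex.exp_sub, Complex.exp_log hAne]
  have hsum : Complex.exp (2*u) + 1 = 2 / (1 + δ) := by
    rw [hexpu]
    field_simp
    linear_combination -hδ
  have hsumne : Complex.exp (2*u) + 1 ≠ 0 := by
    rw [hsum]; exact div_ne_zero two_ne_zero hAne
  have htanh : 1 + Complex.tanh u = Complex.exp (2*w) := by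
    set t := Complex.exp u with htdef
    have htne : t ≠ 0 := Complex.exp_ne_zero u
    have ht2 : t^2 = Complex.exp (2*u) := by
      rw [sq, ← Complex.exp_add]; ring_nf
    have ht2ne : t^2 + 1 ≠ 0 := by rw [ht2]; exact hsumne
    set tinv := Complex.exp (-u) with htinv
    have htt : t * tinv = 1 := by
      rw [htdef, htinv, ← Complex.exp_add]; simp
    have hcosh : Complex.cosh u = (t + tinv) / 2 := by
      have h := Complex.two_cosh (x := u)
      rw [← htdef, ← htinv] at h
      linear_combination h / 2
    have hsinh : Complex.sinh u = (t - tinv) / 2 := by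
      have h := Complex.two_sinh (x := u)
      rw [← htdef, ← htinv] at h
      linear_combination h / 2
    have httne : t + tinv ≠ 0 := by
      intro h0
      apply ht2ne
      linear_combination t * h0 - htt
    have h6 : 1 + Complex.tanh u = 2*t^2 / (t^2 + 1) := by
      rw [Complex.tanh_eq_sinh_div_cosh, hsinh, hcosh]
      field_simp
      linear_combination (-2)*t*htt
    rw [h6, ht2, hsum, hexpu]
    field_simp
  refine ⟨u, mem_ball_zero_iff.mpr hunorm, ?_⟩
  rw [hωeq z hz]
  show Complex.exp w = (1 + Complex.tanh u) ^ ((1:ℂ)/2)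
  rw [htanh]
  have him : |((2:ℂ)*w).im| < Real.pi := by
    have h1 := Complex.abs_im_le_norm ((2:ℂ)*w)
    rw [hn2] at h1
    have := Real.pi_gt_three
    linarith
  obtain ⟨him1, him2⟩ := abs_lt.mp him
  rw [Complex.cpow_def_of_ne_zero (Complex.exp_ne_zero _),
    Complex.log_exp him1 him2.le,
    show (2:ℂ)*w*(1/2) = w by ring]
end
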